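/- arXiv:1603.02882 — 2 statements merged into one kernel-verified Lean document; each statement's English description precedes it below -/
import Mathlib

section
/- Let (X, d) be a Polish space. For probability measures μ, ν in the Wasserstein space of order 1, the Wasserstein metric W₁ admits the Kantorovich–Rubinstein dual representation: W₁(μ, ν) = sup over all 1-Lipschitz functions f : X → ℝ of (∫ f dμ − ∫ f dν). -/
open MeasureTheory

/-- The Wasserstein distance of order 1, defined as the infimum of expected distances
over all couplings. -/
noncomputable def W1 {X : Type*} [MetricSpace X] [MeasurableSpace X] (μ ν : Measure X) : ℝ :=
  sInf {c : ℝ | ∃ π : Measure (X × X), IsProbabilityMeasure π ∧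
    π.map Prod.fst = μ ∧ π.map Prod.snd = ν ∧ c = ∫ p, dist p.1 p.2 ∂π}

/-- Membership in the Wasserstein space of order 1: a Borel probability measure with
finite first moment. -/
def MemP1 {X : Type*} [MetricSpace X] [MeasurableSpace X] (x₀ : X) (μ : Measure X) : Prop :=
  IsProbabilityMeasure μ ∧ Integrable (fun x => dist x₀ x) μ

open Finset
set_option linter.unusedSectionVars false
set_option maxHeartbeats 1000000

section FinKR
variable {X : Type*} [MetricSpace X] {ι : Type*} [Fintype ι] [DecidableEq ι]

variable (x : ι → X)

/-- value of a chain -/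
def vchain : X → List (ι × ι) → X → ℝ
  | z, [], y => dist z y
  | z, e :: L, y => dist z (x e.1) - dist (x e.1) (x e.2) + vchain (x e.2) L y

lemma vchain_append (z : X) (A : List (ι × ι)) (e : ι × ι) (B : List (ι × ι)) (y : X) :
    vchain x z (A ++ e :: B) y
      = vchain x z A (x e.1) - dist (x e.1) (x e.2) + vchain x (x e.2) B y := by
  induction A generalizing z with
  | nil => simp [vchain]
  | cons c A ih => simp [vchain, ih]; ring

lemma vchain_concat (z : X) (A : List (ι × ι)) (e : ι × ι) (y : X) :
    vchain x z (A ++ [e]) y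
      = vchain x z A (x e.1) - dist (x e.1) (x e.2) + dist (x e.2) y := by
  simpa [vchain] using vchain_append x z A e [] y

variable (s₀ : ι) (supp : Finset (ι × ι)) (hs : supp.Nonempty)

/-- Bellman-Ford iterates -/
noncomputable def BF : ℕ → X → ℝ
  | 0, y => dist (x s₀) y
  | (m+1), y => min (BF m y)
      (supp.inf' hs (fun e => BF m (x e.1) - dist (x e.1) (x e.2) + dist (x e.2) y))

lemma BF_lipschitz (m : ℕ) : LipschitzWith 1 (BF x s₀ supp hs m) := by
  induction m with
  | zero =>
    exact LipschitzWith.of_le_add fun a b => by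
      simpa [BF] using (dist_triangle_right (x s₀) a b).trans (by simp [dist_comm, le_refl])
  | succ m ih =>
    apply LipschitzWith.of_le_add
    intro a b
    have key : ∀ g : X → ℝ, LipschitzWith 1 g → ∀ a b : X, g a ≤ g b + dist a b := by
      intro g hg a b
      have h := hg.dist_le_mul a b
      rw [Real.dist_eq] at h
      have := (le_abs_self (g a - g b)).trans h
      have h1 : (1:NNReal) * dist a b = dist a b := by simp
      linarith [h1 ▸ this]
    simp only [BF]
    have h1 : BF x s₀ supp hs m a ≤ BF x s₀ supp hs m b + dist a b := key _ ih a b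
    have h2 : supp.inf' hs (fun e => BF x s₀ supp hs m (x e.1)
          - dist (x e.1) (x e.2) + dist (x e.2) a)
        ≤ supp.inf' hs (fun e => BF x s₀ supp hs m (x e.1)
          - dist (x e.1) (x e.2) + dist (x e.2) b) + dist a b := by
      rw [← sub_le_iff_le_add]
      apply Finset.le_inf'
      intro e he
      rw [sub_le_iff_le_add]
      calc supp.inf' hs (fun e => BF x s₀ supp hs m (x e.1)
            - dist (x e.1) (x e.2) + dist (x e.2) a)
          ≤ BF x s₀ supp hs m (x e.1) - dist (x e.1) (x e.2) + dist (x e.2) a :=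
            Finset.inf'_le _ he
        _ ≤ (BF x s₀ supp hs m (x e.1) - dist (x e.1) (x e.2) + dist (x e.2) b) + dist a b := by
            have := dist_triangle (x e.2) b a
            rw [dist_comm b a] at this
            linarith
    calc min (BF x s₀ supp hs m a) _ ≤ min (BF x s₀ supp hs m b + dist a b) _ :=
          min_le_min h1 h2
      _ = _ + dist a b := min_add_add_right _ _ _

lemma BF_succ_le (m : ℕ) (y : X) : BF x s₀ supp hs (m+1) y ≤ BF x s₀ supp hs m y :=
  min_le_left _ _

lemma BF_antitone {m m' : ℕ} (h : m ≤ m') (y : X) :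
    BF x s₀ supp hs m' y ≤ BF x s₀ supp hs m y := by
  induction m' with
  | zero => simp_all
  | succ k ih =>
    rcases Nat.lt_or_ge m (k+1) with h'|h'
    · exact (BF_succ_le x s₀ supp hs k y).trans (ih (Nat.lt_succ_iff.mp h'))
    · have : m = k + 1 := le_antisymm h h'
      subst this; rfl

lemma BF_le_vchain (L : List (ι × ι)) (hL : ∀ e ∈ L, e ∈ supp) (y : X) :
    BF x s₀ supp hs L.length y ≤ vchain x (x s₀) L y := by
  induction L using List.reverseRecOn generalizing y with
  | nil => simp [BF, vchain]
  | append_singleton A e ih =>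
    rw [vchain_concat]
    have hA : ∀ e ∈ A, e ∈ supp := fun c hc => hL c (by simp [hc])
    have he : e ∈ supp := hL e (by simp)
    calc BF x s₀ supp hs (A ++ [e]).length y
        ≤ supp.inf' hs (fun e => BF x s₀ supp hs A.length (x e.1)
            - dist (x e.1) (x e.2) + dist (x e.2) y) := by
          simp only [List.length_append, List.length_singleton, BF]
          exact min_le_right _ _
      _ ≤ BF x s₀ supp hs A.length (x e.1) - dist (x e.1) (x e.2) + dist (x e.2) y :=
          Finset.inf'_le _ he
      _ ≤ _ := by
          have := ih (fun c hc => hA c hc) (x e.1)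
          linarith

lemma exists_vchain_le (m : ℕ) (y : X) :
    ∃ L : List (ι × ι), (∀ e ∈ L, e ∈ supp) ∧ vchain x (x s₀) L y ≤ BF x s₀ supp hs m y := by
  induction m generalizing y with
  | zero => exact ⟨[], by simp, by simp [BF, vchain]⟩
  | succ m ih =>
    rcases min_cases (BF x s₀ supp hs m y)
      (supp.inf' hs (fun e => BF x s₀ supp hs m (x e.1)
        - dist (x e.1) (x e.2) + dist (x e.2) y)) with ⟨h, _⟩|⟨h, _⟩
    · obtain ⟨L, hL, hv⟩ := ih y
      exact ⟨L, hL, by rw [BF, h]; exact hv⟩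
    · obtain ⟨e, he, hee⟩ := Finset.exists_mem_eq_inf' hs
        (fun e => BF x s₀ supp hs m (x e.1) - dist (x e.1) (x e.2) + dist (x e.2) y)
      obtain ⟨L, hL, hv⟩ := ih (x e.1)
      refine ⟨L ++ [e], ?_, ?_⟩
      · intro c hc
        rcases List.mem_append.mp hc with h'|h'
        · exact hL c h'
        · simpa using List.mem_singleton.mp h' ▸ he
      · rw [vchain_concat, BF, h, hee]
        linarith

/-- cycle shift pairs -/
def cyc2 : (ι × ι) → List (ι × ι) → (ι × ι) → List (ι × ι)
  | prev, [], first => [(first.1, prev.2)]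
  | prev, c :: L, first => (c.1, prev.2) :: cyc2 c L first

lemma cyc2_map_snd (prev : ι × ι) (L : List (ι × ι)) (first : ι × ι) :
    (cyc2 prev L first).map Prod.snd = prev.2 :: L.map Prod.snd := by
  induction L generalizing prev with
  | nil => simp [cyc2]
  | cons c L ih => simp [cyc2, ih]

lemma cyc2_map_fst (prev : ι × ι) (L : List (ι × ι)) (first : ι × ι) :
    (cyc2 prev L first).map Prod.fst = L.map Prod.fst ++ [first.1] := by
  induction L generalizing prev with
  | nil => simp [cyc2]
  | cons c L ih => simp [cyc2, ih]

lemma cyc2_dd_sum (prev : ι × ι) (L : List (ι × ι)) (first : ι × ι) :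
    ((cyc2 prev L first).map (fun c => dist (x c.1) (x c.2))).sum
      = vchain x (x prev.2) L (x first.1)
        + (L.map (fun c => dist (x c.1) (x c.2))).sum := by
  induction L generalizing prev with
  | nil => simp [cyc2, vchain, dist_comm]
  | cons c L ih => simp [cyc2, vchain, ih, dist_comm]; ring

lemma sum_ite_pair_fst (c : ι × ι) (s : ι) :
    ∑ t : ι, (if c = (s, t) then (1:ℝ) else 0) = if c.1 = s then 1 else 0 := by
  rcases eq_or_ne c.1 s with h|h
  · rw [Finset.sum_eq_single c.2]
    · subst h; simp [Prod.ext_iff]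
    · intro t _ ht
      rw [if_neg]; rintro rfl; exact ht rfl
    · simp
  · rw [Finset.sum_eq_zero, if_neg h]
    intro t _
    rw [if_neg]; rintro rfl; exact h rfl

lemma sum_ite_pair_snd (c : ι × ι) (t : ι) :
    ∑ s : ι, (if c = (s, t) then (1:ℝ) else 0) = if c.2 = t then 1 else 0 := by
  rcases eq_or_ne c.2 t with h|h
  · rw [Finset.sum_eq_single c.1]
    · subst h; simp [Prod.ext_iff]
    · intro s _ hst
      rw [if_neg]; rintro rfl; exact hst rfl
    · simp
  · rw [Finset.sum_eq_zero, if_neg h]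
    intro s _
    rw [if_neg]; rintro rfl; exact h rfl

lemma count_sum_mul (f : (ι × ι) → ℝ) (L : List (ι × ι)) :
    ∑ z : ι × ι, f z * (L.count z : ℝ) = (L.map f).sum := by
  induction L with
  | nil => simp
  | cons c L ih =>
    simp only [List.count_cons, List.map_cons, List.sum_cons, beq_iff_eq]
    push_cast
    have key : ∀ z : ι × ι, f z * ((L.count z : ℝ) + if c = z then 1 else 0)
        = f z * (L.count z : ℝ) + (if c = z then f z else 0) := by
      intro z; rcases eq_or_ne c z with h|h <;> simp [h] <;> ring
    rw [Finset.sum_congr rfl (fun z _ => key z), Finset.sum_add_distrib, ih,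
      Finset.sum_ite_eq Finset.univ c f]
    simp [add_comm]

lemma count_fst_sum (L : List (ι × ι)) (s : ι) :
    ∑ t : ι, (L.count (s, t) : ℝ) = ((L.map Prod.fst).count s : ℝ) := by
  induction L with
  | nil => simp
  | cons c L ih =>
    simp only [List.count_cons, List.map_cons, beq_iff_eq]
    push_cast
    rw [Finset.sum_add_distrib, ih, sum_ite_pair_fst]

lemma count_snd_sum (L : List (ι × ι)) (t : ι) :
    ∑ s : ι, (L.count (s, t) : ℝ) = ((L.map Prod.snd).count t : ℝ) := by
  induction L with
  | nil => simp
  | cons c L ih =>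
    simp only [List.count_cons, List.map_cons, beq_iff_eq]
    push_cast
    rw [Finset.sum_add_distrib, ih, sum_ite_pair_snd]

def Cpl (a b : ι → ℝ) : Set ((ι × ι) → ℝ) :=
  {p | (∀ z, 0 ≤ p z) ∧ (∀ s, ∑ t, p (s, t) = a s) ∧ (∀ t, ∑ s, p (s, t) = b t)}

noncomputable def cost (p : (ι × ι) → ℝ) : ℝ := ∑ z : ι × ι, dist (x z.1) (x z.2) * p z

lemma cyc_nonneg (a b : ι → ℝ) (p : (ι × ι) → ℝ) (hp : p ∈ Cpl a b)
    (hmin : ∀ q ∈ Cpl a b, cost x p ≤ cost x q)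
    (e : ι × ι) (M : List (ι × ι)) (he : 0 < p e) (hM : ∀ c ∈ M, 0 < p c) :
    dist (x e.1) (x e.2) ≤ vchain x (x e.2) M (x e.1) := by
  classical
  set C : List (ι × ι) := e :: M with hC
  set C' : List (ι × ι) := cyc2 e M e with hC'
  have hCpos : ∀ c ∈ C, 0 < p c := by
    intro c hc
    rcases List.mem_cons.mp hc with rfl|h
    · exact he
    · exact hM c h
  have hCne : C.toFinset.Nonempty := ⟨e, by simp [hC]⟩
  set m₀ : ℝ := C.toFinset.inf' hCne p with hm₀
  have hm₀pos : 0 < m₀ := by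
    rw [hm₀]
    apply Finset.lt_inf'_iff hCne (f := p) (a := 0) |>.mpr
    intro c hc
    exact hCpos c (List.mem_toFinset.mp hc)
  have hlen : 0 < (C.length : ℝ) := by simp [hC]; positivity
  set ε : ℝ := m₀ / C.length with hε
  have hεpos : 0 < ε := div_pos hm₀pos hlen
  have hεlen : ε * C.length = m₀ := div_mul_cancel₀ _ (ne_of_gt hlen)
  set q : (ι × ι) → ℝ := fun z => p z + ε * ((C'.count z : ℝ) - (C.count z : ℝ)) with hqdef
  have hq : q ∈ Cpl a b := by
    refine ⟨?_, ?_, ?_⟩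
    · intro z
      rcases Nat.eq_zero_or_pos (C.count z) with h|h
      · have : (0:ℝ) ≤ ε * (C'.count z : ℝ) := by positivity
        simp only [hqdef, h]
        push_cast
        linarith [hp.1 z]
      · have hzC : z ∈ C := List.count_pos_iff.mp h
        have h1 : m₀ ≤ p z := Finset.inf'_le _ (List.mem_toFinset.mpr hzC)
        have h2 : (C.count z : ℝ) ≤ (C.length : ℝ) := by
          exact_mod_cast (List.count_le_length : C.count z ≤ C.length)
        have h3 : ε * (C.count z : ℝ) ≤ m₀ := by
          rw [← hεlen]
          exact mul_le_mul_of_nonneg_left h2 hεpos.le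
        have : (0:ℝ) ≤ ε * (C'.count z : ℝ) := by positivity
        simp only [hqdef]
        nlinarith
    · intro s
      simp only [hqdef]
      rw [Finset.sum_add_distrib, hp.2.1 s]
      have : ∑ t : ι, ε * ((C'.count (s, t) : ℝ) - (C.count (s, t) : ℝ))
          = ε * (((C'.map Prod.fst).count s : ℝ) - ((C.map Prod.fst).count s : ℝ)) := by
        rw [← Finset.mul_sum]
        congr 1
        rw [Finset.sum_sub_distrib, count_fst_sum, count_fst_sum]
      rw [this]
      have hperm : (C'.map Prod.fst).count s = (C.map Prod.fst).count s := by
        rw [hC', cyc2_map_fst, hC]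
        simp only [List.map_cons]
        exact (List.perm_append_singleton e.1 (M.map Prod.fst)).count_eq s
      rw [hperm]
      simp
    · intro t
      simp only [hqdef]
      rw [Finset.sum_add_distrib, hp.2.2 t]
      have : ∑ s : ι, ε * ((C'.count (s, t) : ℝ) - (C.count (s, t) : ℝ))
          = ε * (((C'.map Prod.snd).count t : ℝ) - ((C.map Prod.snd).count t : ℝ)) := by
        rw [← Finset.mul_sum]
        congr 1
        rw [Finset.sum_sub_distrib, count_snd_sum, count_snd_sum]
      rw [this]
      have hsnd : C'.map Prod.snd = C.map Prod.snd := by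
        rw [hC', cyc2_map_snd, hC, List.map_cons]
      rw [hsnd]
      simp
  have hcost : cost x q = cost x p
      + ε * (vchain x (x e.2) M (x e.1) - dist (x e.1) (x e.2)) := by
    simp only [cost, hqdef]
    rw [Finset.sum_congr rfl (fun z _ => by ring :
      ∀ z ∈ Finset.univ, dist (x z.1) (x z.2) * (p z + ε * ((C'.count z : ℝ) - (C.count z : ℝ)))
        = dist (x z.1) (x z.2) * p z
          + ε * (dist (x z.1) (x z.2) * (C'.count z : ℝ) - dist (x z.1) (x z.2) * (C.count z : ℝ)))]
    rw [Finset.sum_add_distrib]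
    congr 1
    rw [← Finset.mul_sum, Finset.sum_sub_distrib, count_sum_mul, count_sum_mul]
    congr 1
    rw [hC', cyc2_dd_sum, hC, List.map_cons, List.sum_cons]
    ring
  have h0 : 0 ≤ ε * (vchain x (x e.2) M (x e.1) - dist (x e.1) (x e.2)) := by
    have := hmin q hq
    linarith [hcost ▸ this]
  nlinarith

lemma not_nodup_decomp {α : Type*} : ∀ (L : List α), ¬L.Nodup →
    ∃ (a : α) (A M N : List α), L = A ++ a :: M ++ a :: N := by
  intro L
  induction L with
  | nil => intro h; exact absurd List.nodup_nil h
  | cons c L ih =>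
    intro h
    by_cases hc : c ∈ L
    · obtain ⟨M, N, rfl⟩ := List.append_of_mem hc
      exact ⟨c, [], M, N, by simp⟩
    · have : ¬L.Nodup := fun hN => h (List.nodup_cons.mpr ⟨hc, hN⟩)
      obtain ⟨a, A, M, N, rfl⟩ := ih this
      exact ⟨a, c :: A, M, N, by simp⟩

lemma excise (a b : ι → ℝ) (p : (ι × ι) → ℝ) (hp : p ∈ Cpl a b)
    (hmin : ∀ q ∈ Cpl a b, cost x p ≤ cost x q) :
    ∀ (n : ℕ) (L : List (ι × ι)), L.length ≤ n → (∀ c ∈ L, 0 < p c) → ∀ (z y : X),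
    ∃ L' : List (ι × ι), L'.Nodup ∧ (∀ c ∈ L', 0 < p c) ∧ vchain x z L' y ≤ vchain x z L y := by
  intro n
  induction n with
  | zero =>
    intro L hL _ z y
    rw [Nat.le_zero, List.length_eq_zero_iff] at hL
    exact ⟨[], by simp [hL], by simp, by simp [hL]⟩
  | succ n ih =>
    intro L hL hLp z y
    by_cases hnd : L.Nodup
    · exact ⟨L, hnd, hLp, le_refl _⟩
    · obtain ⟨e, A, M, N, rfl⟩ := not_nodup_decomp _ hnd
      have hmem : ∀ c ∈ A ++ e :: M ++ e :: N, 0 < p c := hLp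
      have hmemA : ∀ c ∈ A, 0 < p c := fun c hc => hmem c (by simp [hc])
      have hmemM : ∀ c ∈ M, 0 < p c := fun c hc => hmem c (by simp [hc])
      have hmemN : ∀ c ∈ N, 0 < p c := fun c hc => hmem c (by simp [hc])
      have hmemE : 0 < p e := hmem e (by simp)
      have key : vchain x z (A ++ e :: N) y ≤ vchain x z (A ++ e :: M ++ e :: N) y := by
        have h1 : vchain x z (A ++ e :: (M ++ e :: N)) y
            = vchain x z A (x e.1) - dist (x e.1) (x e.2)
              + vchain x (x e.2) (M ++ e :: N) y := vchain_append x z A e _ y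
        have h2 : vchain x (x e.2) (M ++ e :: N) y
            = vchain x (x e.2) M (x e.1) - dist (x e.1) (x e.2)
              + vchain x (x e.2) N y := vchain_append x (x e.2) M e N y
        have h3 : vchain x z (A ++ e :: N) y
            = vchain x z A (x e.1) - dist (x e.1) (x e.2)
              + vchain x (x e.2) N y := vchain_append x z A e N y
        have h4 : dist (x e.1) (x e.2) ≤ vchain x (x e.2) M (x e.1) :=
          cyc_nonneg x a b p hp hmin e M hmemE hmemM
        have : A ++ e :: M ++ e :: N = A ++ e :: (M ++ e :: N) := by simp
        rw [this, h1, h2, h3]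
        linarith
      have hlen : (A ++ e :: N).length ≤ n := by
        have := hL
        simp only [List.length_append, List.length_cons] at this ⊢
        omega
      obtain ⟨L', h1, h2, h3⟩ := ih (A ++ e :: N) hlen
        (by intro c hc; rcases List.mem_append.mp hc with h|h
            · exact hmemA c h
            · rcases List.mem_cons.mp h with rfl|h
              · exact hmemE
              · exact hmemN c h) z y
      exact ⟨L', h1, h2, h3.trans key⟩

theorem finKR [Nonempty ι] (a b : ι → ℝ) (ha : ∀ i, 0 ≤ a i) (hb : ∀ i, 0 ≤ b i)
    (hsa : ∑ i, a i = 1) (hsb : ∑ i, b i = 1) :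
    ∃ (f : X → ℝ) (p : (ι × ι) → ℝ), LipschitzWith 1 f ∧ p ∈ Cpl a b ∧
      cost x p = ∑ i, f (x i) * (a i - b i) := by
  classical
  -- the coupling set is nonempty, closed, bounded
  have hne : (Cpl a b : Set ((ι × ι) → ℝ)).Nonempty := by
    refine ⟨fun z => a z.1 * b z.2, fun z => mul_nonneg (ha z.1) (hb z.2), ?_, ?_⟩
    · intro s; simp only []; rw [← Finset.mul_sum, hsb, mul_one]
    · intro t; simp only []; rw [← Finset.sum_mul, hsa, one_mul]
  have hclosed : IsClosed (Cpl a b : Set ((ι × ι) → ℝ)) := by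
    have : (Cpl a b : Set ((ι × ι) → ℝ))
        = (⋂ z, {p : (ι × ι) → ℝ | 0 ≤ p z})
          ∩ ((⋂ s, {p : (ι × ι) → ℝ | ∑ t, p (s, t) = a s})
            ∩ (⋂ t, {p : (ι × ι) → ℝ | ∑ s, p (s, t) = b t})) := by
      ext p
      simp [Cpl, Set.mem_iInter, forall_and]
    rw [this]
    refine IsClosed.inter (isClosed_iInter fun z => isClosed_le continuous_const
      (continuous_apply z)) (IsClosed.inter ?_ ?_)
    · exact isClosed_iInter fun s => isClosed_eq
        (continuous_finset_sum _ fun t _ => continuous_apply (s, t)) continuous_const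
    · exact isClosed_iInter fun t => isClosed_eq
        (continuous_finset_sum _ fun s _ => continuous_apply (s, t)) continuous_const
  have hbdd : Bornology.IsBounded (Cpl a b : Set ((ι × ι) → ℝ)) := by
    rw [Metric.isBounded_iff_subset_closedBall 0]
    refine ⟨1, fun p hp => ?_⟩
    rw [Metric.mem_closedBall, dist_zero_right]
    apply pi_norm_le_iff_of_nonneg (by norm_num : (0:ℝ) ≤ 1) |>.mpr
    intro z
    rw [Real.norm_eq_abs, abs_of_nonneg (hp.1 z)]
    calc p z ≤ ∑ t, p (z.1, t) :=
          Finset.single_le_sum (fun t _ => hp.1 (z.1, t)) (Finset.mem_univ z.2)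
      _ = a z.1 := hp.2.1 z.1
      _ ≤ ∑ i, a i := Finset.single_le_sum (fun i _ => ha i) (Finset.mem_univ z.1)
      _ = 1 := hsa
  have hcont : Continuous (cost x) :=
    continuous_finset_sum _ fun z _ => (continuous_const.mul (continuous_apply z))
  obtain ⟨p, hpmem, hpmin'⟩ :=
    (Metric.isCompact_of_isClosed_isBounded hclosed hbdd).exists_isMinOn hne hcont.continuousOn
  have hpmin : ∀ q ∈ Cpl a b, cost x p ≤ cost x q := fun q hq => hpmin' hq
  -- support
  set supp : Finset (ι × ι) := Finset.univ.filter (fun z => 0 < p z) with hsupp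
  have hsum1 : ∑ z : ι × ι, p z = 1 := by
    rw [Fintype.sum_prod_type]
    calc ∑ s, ∑ t, p (s, t) = ∑ s, a s := Finset.sum_congr rfl fun s _ => hpmem.2.1 s
      _ = 1 := hsa
  have hs : supp.Nonempty := by
    by_contra h
    rw [Finset.not_nonempty_iff_eq_empty] at h
    have hz : ∀ z : ι × ι, p z = 0 := by
      intro z
      have : z ∉ supp := h ▸ Finset.notMem_empty z
      rw [hsupp, Finset.mem_filter] at this
      push_neg at this
      exact le_antisymm (this (Finset.mem_univ z)) (hpmem.1 z)
    rw [Finset.sum_congr rfl (fun z _ => hz z)] at hsum1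
    simp at hsum1
  set s₀ : ι := Classical.arbitrary ι with hs₀
  set K : ℕ := supp.card with hK
  set f : X → ℝ := BF x s₀ supp hs K with hf
  have hmemp : ∀ c : ι × ι, c ∈ supp ↔ 0 < p c := by
    intro c; rw [hsupp, Finset.mem_filter]; simp
  -- complementary slackness
  have hslack : ∀ e ∈ supp, f (x e.1) - f (x e.2) = dist (x e.1) (x e.2) := by
    intro e he
    have hlip := BF_lipschitz x s₀ supp hs K
    have hle : f (x e.1) - f (x e.2) ≤ dist (x e.1) (x e.2) := by
      have h := hlip.dist_le_mul (x e.1) (x e.2)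
      rw [Real.dist_eq] at h
      have h2 := (le_abs_self (f (x e.1) - f (x e.2))).trans h
      simpa using h2
    have hge : dist (x e.1) (x e.2) ≤ f (x e.1) - f (x e.2) := by
      obtain ⟨L, hL, hLv⟩ := exists_vchain_le x s₀ supp hs K (x e.1)
      have hLp : ∀ c ∈ L, 0 < p c := fun c hc => (hmemp c).mp (hL c hc)
      obtain ⟨L₀, hL₀nd, hL₀p, hL₀v⟩ := excise x a b p hpmem hpmin L.length L
        (le_refl _) hLp (x s₀) (x e.1)
      have heL : ∀ c ∈ L₀ ++ [e], 0 < p c := by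
        intro c hc
        rcases List.mem_append.mp hc with h|h
        · exact hL₀p c h
        · rw [List.mem_singleton.mp h]; exact (hmemp e).mp he
      obtain ⟨L₁, hL₁nd, hL₁p, hL₁v⟩ := excise x a b p hpmem hpmin (L₀ ++ [e]).length
        (L₀ ++ [e]) (le_refl _) heL (x s₀) (x e.2)
      have hv1 : vchain x (x s₀) (L₀ ++ [e]) (x e.2)
          = vchain x (x s₀) L₀ (x e.1) - dist (x e.1) (x e.2) := by
        rw [vchain_concat]; simp
      have hlen : L₁.length ≤ K := by
        have h1 : L₁.toFinset.card = L₁.length := List.toFinset_card_of_nodup hL₁nd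
        have h2 : L₁.toFinset ⊆ supp := by
          intro c hc
          exact (hmemp c).mpr (hL₁p c (List.mem_toFinset.mp hc))
        rw [← h1, hK]
        exact Finset.card_le_card h2
      have hBF : f (x e.2) ≤ vchain x (x s₀) L₁ (x e.2) := by
        calc f (x e.2) ≤ BF x s₀ supp hs L₁.length (x e.2) := BF_antitone x s₀ supp hs hlen _
          _ ≤ vchain x (x s₀) L₁ (x e.2) :=
            BF_le_vchain x s₀ supp hs L₁ (fun c hc => (hmemp c).mpr (hL₁p c hc)) _
      have : f (x e.2) ≤ f (x e.1) - dist (x e.1) (x e.2) := by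
        calc f (x e.2) ≤ vchain x (x s₀) L₁ (x e.2) := hBF
          _ ≤ vchain x (x s₀) (L₀ ++ [e]) (x e.2) := hL₁v
          _ = vchain x (x s₀) L₀ (x e.1) - dist (x e.1) (x e.2) := hv1
          _ ≤ vchain x (x s₀) L (x e.1) - dist (x e.1) (x e.2) := by linarith
          _ ≤ f (x e.1) - dist (x e.1) (x e.2) := by
              have := hLv
              linarith
      linarith
    linarith
  -- conclude
  refine ⟨f, p, BF_lipschitz x s₀ supp hs K, hpmem, ?_⟩
  have step1 : cost x p = ∑ z : ι × ι, (f (x z.1) - f (x z.2)) * p z := by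
    apply Finset.sum_congr rfl
    intro z _
    by_cases hz : 0 < p z
    · rw [hslack z ((hmemp z).mpr hz)]
    · rw [le_antisymm (not_lt.mp hz) (hpmem.1 z)]
      ring
  rw [step1]
  have step2 : ∑ z : ι × ι, (f (x z.1) - f (x z.2)) * p z
      = ∑ z : ι × ι, f (x z.1) * p z - ∑ z : ι × ι, f (x z.2) * p z := by
    rw [← Finset.sum_sub_distrib]
    exact Finset.sum_congr rfl fun z _ => by ring
  rw [step2]
  have step3 : ∑ z : ι × ι, f (x z.1) * p z = ∑ i, f (x i) * a i := by
    rw [Fintype.sum_prod_type]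
    exact Finset.sum_congr rfl fun s _ => by
      simp only []
      rw [← Finset.mul_sum, hpmem.2.1 s]
  have step4 : ∑ z : ι × ι, f (x z.2) * p z = ∑ i, f (x i) * b i := by
    rw [Fintype.sum_prod_type_right]
    exact Finset.sum_congr rfl fun t _ => by
      simp only []
      rw [← Finset.mul_sum, hpmem.2.2 t]
  rw [step3, step4, ← Finset.sum_sub_distrib]
  exact Finset.sum_congr rfl fun i _ => by ring

end FinKR

section MeasureSide
open Filter Topology
variable {X : Type*} [MetricSpace X] [TopologicalSpace.SeparableSpace X]
  [MeasurableSpace X] [BorelSpace X]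

lemma lip_integrable (x₀ : X) (μ : Measure X) [IsProbabilityMeasure μ]
    (hint : Integrable (fun x => dist x₀ x) μ) (f : X → ℝ) (hf : LipschitzWith 1 f) :
    Integrable f μ := by
  refine Integrable.mono' (g := fun x => |f x₀| + dist x₀ x)
    ((integrable_const (|f x₀|)).add hint)
    hf.continuous.aestronglyMeasurable (Filter.Eventually.of_forall fun x => ?_)
  have h := hf.dist_le_mul x x₀
  rw [Real.dist_eq] at h
  have : |f x| - |f x₀| ≤ |f x - f x₀| := by
    have := abs_sub_abs_le_abs_sub (f x) (f x₀)
    linarith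
  simp only [Real.norm_eq_abs]
  have hd : dist x x₀ = dist x₀ x := dist_comm _ _
  simp only [NNReal.coe_one, one_mul] at h
  linarith

lemma dist_pair_integrable (x₀ : X) (π : Measure (X × X)) [IsProbabilityMeasure π]
    (μ ν : Measure X) (h1 : π.map Prod.fst = μ) (h2 : π.map Prod.snd = ν)
    (hμ : Integrable (fun x => dist x₀ x) μ) (hν : Integrable (fun x => dist x₀ x) ν) :
    Integrable (fun p : X × X => dist p.1 p.2) π := by
  haveI : SecondCountableTopology X := UniformSpace.secondCountable_of_separable X
  have hg1 : Integrable (fun p : X × X => dist x₀ p.1) π := by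
    rw [← h1] at hμ
    exact (integrable_map_measure (Continuous.aestronglyMeasurable (by fun_prop))
      measurable_fst.aemeasurable).mp hμ
  have hg2 : Integrable (fun p : X × X => dist x₀ p.2) π := by
    rw [← h2] at hν
    exact (integrable_map_measure (Continuous.aestronglyMeasurable (by fun_prop))
      measurable_snd.aemeasurable).mp hν
  refine Integrable.mono' (hg1.add hg2)
    (Continuous.aestronglyMeasurable (by fun_prop)) (Filter.Eventually.of_forall fun p => ?_)
  rw [Real.norm_eq_abs, abs_of_nonneg dist_nonneg]
  calc dist p.1 p.2 ≤ dist p.1 x₀ + dist x₀ p.2 := dist_triangle _ _ _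
    _ = dist x₀ p.1 + dist x₀ p.2 := by rw [dist_comm p.1 x₀]

lemma dual_le_cost (x₀ : X) (μ ν : Measure X) (hμ : MemP1 x₀ μ) (hν : MemP1 x₀ ν)
    (π : Measure (X × X)) (hπ : IsProbabilityMeasure π)
    (h1 : π.map Prod.fst = μ) (h2 : π.map Prod.snd = ν)
    (f : X → ℝ) (hf : LipschitzWith 1 f) :
    ∫ x, f x ∂μ - ∫ x, f x ∂ν ≤ ∫ p, dist p.1 p.2 ∂π := by
  have : IsProbabilityMeasure μ := hμ.1
  have : IsProbabilityMeasure ν := hν.1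
  have hfμ : Integrable f μ := lip_integrable x₀ μ hμ.2 f hf
  have hfν : Integrable f ν := lip_integrable x₀ ν hν.2 f hf
  have hfπ1 : Integrable (fun p : X × X => f p.1) π := by
    rw [← h1] at hfμ
    exact (integrable_map_measure hf.continuous.aestronglyMeasurable
      measurable_fst.aemeasurable).mp hfμ
  have hfπ2 : Integrable (fun p : X × X => f p.2) π := by
    rw [← h2] at hfν
    exact (integrable_map_measure hf.continuous.aestronglyMeasurable
      measurable_snd.aemeasurable).mp hfν
  have hd : Integrable (fun p : X × X => dist p.1 p.2) π :=
    dist_pair_integrable x₀ π μ ν h1 h2 hμ.2 hν.2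
  have e1 : ∫ x, f x ∂μ = ∫ p : X × X, f p.1 ∂π := by
    rw [← h1, integral_map measurable_fst.aemeasurable hf.continuous.aestronglyMeasurable]
  have e2 : ∫ x, f x ∂ν = ∫ p : X × X, f p.2 ∂π := by
    rw [← h2, integral_map measurable_snd.aemeasurable hf.continuous.aestronglyMeasurable]
  rw [e1, e2, ← integral_sub hfπ1 hfπ2]
  apply integral_mono (hfπ1.sub hfπ2) hd
  intro p
  have h := hf.dist_le_mul p.1 p.2
  rw [Real.dist_eq] at h
  have := (le_abs_self (f p.1 - f p.2)).trans h
  simpa using this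

end MeasureSide

section Discretize
open Filter Topology
open scoped Classical
variable {X : Type*} [MetricSpace X] [TopologicalSpace.SeparableSpace X]
  [MeasurableSpace X] [BorelSpace X]

/-- the cells of the partition -/
def Aset (u : ℕ → X) (r : ℝ) (n : ℕ) : Set X :=
  Metric.ball (u n) r \ ⋃ m < n, Metric.ball (u m) r

lemma Aset_measurable (u : ℕ → X) (r : ℝ) (n : ℕ) : MeasurableSet (Aset u r n) :=
  measurableSet_ball.diff
    (MeasurableSet.biUnion (Set.to_countable _) (fun _ _ => measurableSet_ball))

lemma Aset_disjoint (u : ℕ → X) (r : ℝ) {n m : ℕ} (x : X)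
    (hn : x ∈ Aset u r n) (hm : x ∈ Aset u r m) : n = m := by
  by_contra h
  rcases Nat.lt_or_ge n m with hlt|hge
  · exact hm.2 (Set.mem_biUnion hlt hn.1)
  · exact hn.2 (Set.mem_biUnion (Nat.lt_of_le_of_ne hge (Ne.symm h)) hm.1)

lemma Aset_cover (u : ℕ → X) (hu : DenseRange u) (r : ℝ) (hr : 0 < r) (x : X) :
    ∃ n, x ∈ Aset u r n := by
  have hex : ∃ n, x ∈ Metric.ball (u n) r := by
    obtain ⟨n, hn⟩ := Metric.denseRange_iff.mp hu x r hr
    exact ⟨n, by simpa [Metric.mem_ball, dist_comm] using hn⟩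
  refine ⟨Nat.find hex, Nat.find_spec hex, ?_⟩
  intro hmem
  simp only [Set.mem_iUnion] at hmem
  obtain ⟨m, hm, hmb⟩ := hmem
  exact Nat.find_min hex hm hmb

/-- discretization maps -/
noncomputable def TN (u : ℕ → X) (x₀ : X) (r : ℝ) : ℕ → X → X
  | 0 => (Aset u r 0).piecewise (fun _ => u 0) (fun _ => x₀)
  | (n+1) => (Aset u r (n+1)).piecewise (fun _ => u (n+1)) (TN u x₀ r n)

lemma TN_measurable (u : ℕ → X) (x₀ : X) (r : ℝ) (N : ℕ) : Measurable (TN u x₀ r N) := by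
  induction N with
  | zero =>
    show Measurable ((Aset u r 0).piecewise (fun _ => u 0) (fun _ => x₀))
    exact Measurable.piecewise (Aset_measurable u r 0) measurable_const measurable_const
  | succ n ih =>
    show Measurable ((Aset u r (n+1)).piecewise (fun _ => u (n+1)) (TN u x₀ r n))
    exact Measurable.piecewise (Aset_measurable u r (n+1)) measurable_const ih

lemma TN_cases (u : ℕ → X) (x₀ : X) (r : ℝ) (N : ℕ) (x : X) :
    TN u x₀ r N x = x₀ ∨ ∃ n ≤ N, x ∈ Aset u r n ∧ TN u x₀ r N x = u n := by
  induction N with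
  | zero =>
    by_cases h : x ∈ Aset u r 0
    · exact Or.inr ⟨0, le_refl _, h, by simp [TN, Set.piecewise, h]⟩
    · exact Or.inl (by simp [TN, Set.piecewise, h])
  | succ n ih =>
    by_cases h : x ∈ Aset u r (n+1)
    · exact Or.inr ⟨n+1, le_refl _, h, by simp [TN, Set.piecewise, h]⟩
    · have he : TN u x₀ r (n+1) x = TN u x₀ r n x := by simp [TN, Set.piecewise, h]
      rcases ih with h'|⟨m, hm, hmem, hval⟩
      · exact Or.inl (he.trans h')
      · exact Or.inr ⟨m, hm.trans (Nat.le_succ n), hmem, he.trans hval⟩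

lemma TN_mem (u : ℕ → X) (x₀ : X) (r : ℝ) (N : ℕ) (x : X) :
    TN u x₀ r N x ∈ insert x₀ ((Finset.range (N+1)).image u) := by
  rcases TN_cases u x₀ r N x with h|⟨n, hn, _, h⟩
  · simp [h]
  · rw [h]
    exact Finset.mem_insert_of_mem (Finset.mem_image.mpr ⟨n, by simp [Nat.lt_succ_iff, hn], rfl⟩)

lemma TN_eq_of_mem (u : ℕ → X) (x₀ : X) (r : ℝ) {N n : ℕ} (hn : n ≤ N) {x : X}
    (hx : x ∈ Aset u r n) : TN u x₀ r N x = u n := by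
  induction N with
  | zero =>
    have : n = 0 := Nat.le_zero.mp hn
    subst this
    show (Aset u r 0).piecewise (fun _ => u 0) (fun _ => x₀) x = u 0
    simp [Set.piecewise, hx]
  | succ N ih =>
    show (Aset u r (N+1)).piecewise (fun _ => u (N+1)) (TN u x₀ r N) x = u n
    rcases Nat.lt_or_ge n (N+1) with h|h
    · have hnot : x ∉ Aset u r (N+1) := by
        intro hmem
        have := Aset_disjoint u r x hx hmem
        omega
      simp only [Set.piecewise, if_neg hnot]
      exact ih (Nat.lt_succ_iff.mp h)
    · have : n = N + 1 := le_antisymm hn h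
      subst this
      simp [Set.piecewise, hx]

lemma TN_dist_le (u : ℕ → X) (x₀ : X) (r : ℝ) (hr : 0 < r) (N : ℕ) (x : X) :
    dist x (TN u x₀ r N x) ≤ dist x x₀ + r := by
  rcases TN_cases u x₀ r N x with h|⟨n, _, hmem, h⟩
  · rw [h]; linarith [dist_nonneg (x := x) (y := x₀)]
  · rw [h]
    have : dist x (u n) < r := by
      have := hmem.1
      rwa [Metric.mem_ball] at this
    linarith [dist_nonneg (x := x) (y := x₀)]

lemma exists_discretization (x₀ : X) (μ ν : Measure X) (hμ : MemP1 x₀ μ) (hν : MemP1 x₀ ν)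
    (ε : ℝ) (hε : 0 < ε) :
    ∃ (T : X → X) (S : Finset X), Measurable T ∧ (∀ x, T x ∈ S) ∧ x₀ ∈ S ∧
      ∫ x, dist x (T x) ∂μ ≤ ε ∧ ∫ x, dist x (T x) ∂ν ≤ ε := by
  haveI : SecondCountableTopology X := UniformSpace.secondCountable_of_separable X
  haveI := hμ.1
  haveI := hν.1
  haveI : Nonempty X := ⟨x₀⟩
  obtain ⟨u, hu⟩ := TopologicalSpace.exists_dense_seq X
  set r : ℝ := ε/2 with hrdef
  have hr : 0 < r := by positivity
  have hcov : ∀ x : X, ∃ n, x ∈ Aset u r n := Aset_cover u hu r hr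
  set g : X → ℝ := fun x => dist x (u (Nat.find (hcov x))) with hg
  have hgr : ∀ x, g x ≤ r := by
    intro x
    have := (Nat.find_spec (hcov x)).1
    rw [Metric.mem_ball] at this
    exact this.le
  have hgnn : ∀ x, 0 ≤ g x := fun x => dist_nonneg
  have hglim : ∀ x : X, Tendsto (fun N => dist x (TN u x₀ r N x)) atTop (𝓝 (g x)) := by
    intro x
    apply Filter.Tendsto.congr' ?_ (tendsto_const_nhds (x := g x))
    filter_upwards [eventually_ge_atTop (Nat.find (hcov x))] with N hN
    rw [TN_eq_of_mem u x₀ r hN (Nat.find_spec (hcov x))]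
  have hbint : ∀ (m : Measure X), IsProbabilityMeasure m →
      Integrable (fun x => dist x₀ x) m → Integrable (fun x => dist x x₀ + r) m := by
    intro m hm hint
    have h1 : Integrable (fun x => dist x x₀) m := by simpa [dist_comm] using hint
    exact h1.add (integrable_const r)
  have key : ∀ (m : Measure X), IsProbabilityMeasure m →
      Integrable (fun x => dist x₀ x) m →
      ∀ᶠ N in atTop, ∫ x, dist x (TN u x₀ r N x) ∂m < ε := by
    intro m hm hint
    have hdct := tendsto_integral_of_dominated_convergence (μ := m)
      (F := fun N x => dist x (TN u x₀ r N x)) (f := g) (fun x => dist x x₀ + r)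
      (fun N => (measurable_id.dist (TN_measurable u x₀ r N)).aestronglyMeasurable)
      (hbint m hm hint)
      (fun N => Filter.Eventually.of_forall fun x => by
        rw [Real.norm_eq_abs, abs_of_nonneg dist_nonneg]
        exact TN_dist_le u x₀ r hr N x)
      (Filter.Eventually.of_forall hglim)
    have hgle : ∫ x, g x ∂m ≤ r := by
      calc ∫ x, g x ∂m ≤ ∫ _, r ∂m := integral_mono_of_nonneg
            (Filter.Eventually.of_forall hgnn) (integrable_const r)
            (Filter.Eventually.of_forall hgr)
        _ = r := by simp [measure_univ]
    exact hdct.eventually_lt_const (by linarith : ∫ x, g x ∂m < ε)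
  obtain ⟨N, hN1, hN2⟩ := ((key μ hμ.1 hμ.2).and (key ν hν.1 hν.2)).exists
  exact ⟨TN u x₀ r N, insert x₀ ((Finset.range (N+1)).image u), TN_measurable u x₀ r N,
    TN_mem u x₀ r N, Finset.mem_insert_self _ _, hN1.le, hN2.le⟩

end Discretize

section Lift
open Filter Topology
open scoped Classical
variable {X : Type*} [MetricSpace X] [TopologicalSpace.SeparableSpace X]
  [MeasurableSpace X] [BorelSpace X]

lemma map_finset_sum' {α β γ : Type*} [MeasurableSpace α] [MeasurableSpace β] {f : α → β}
    (hf : Measurable f) (I : Finset γ) (m : γ → Measure α) :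
    (∑ i ∈ I, m i).map f = ∑ i ∈ I, (m i).map f := by
  classical
  induction I using Finset.cons_induction with
  | empty => simp
  | cons i I hi ih => rw [Finset.sum_cons, Measure.map_add _ _ hf, ih, Finset.sum_cons]

lemma preim_disjoint (T : X → X) (S : Finset X) :
    Set.PairwiseDisjoint (α := Set X) ((Finset.univ : Finset ↥S) : Set ↥S)
      (fun s : ↥S => T ⁻¹' {(s : X)}) := by
  intro s _ t _ hst
  apply Set.disjoint_left.mpr
  intro x hx1 hx2
  simp only [Set.mem_preimage, Set.mem_singleton_iff] at hx1 hx2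
  exact hst (Subtype.coe_injective (hx1.symm.trans hx2))

lemma preim_cover (T : X → X) (S : Finset X) (hTS : ∀ x, T x ∈ S) :
    (⋃ s ∈ (Finset.univ : Finset ↥S), T ⁻¹' {(s : X)}) = Set.univ := by
  ext x
  simp only [Set.mem_iUnion, Set.mem_preimage, Set.mem_singleton_iff, Set.mem_univ, iff_true]
  exact ⟨⟨T x, hTS x⟩, Finset.mem_univ _, rfl⟩

lemma sum_measure_partition (μ : Measure X) [IsFiniteMeasure μ] (T : X → X) (hT : Measurable T)
    (S : Finset X) (hTS : ∀ x, T x ∈ S) :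
    ∑ s : ↥S, μ.restrict (T ⁻¹' {(s : X)}) = μ := by
  ext E hE
  rw [Measure.finset_sum_apply]
  have h1 : ∀ s : ↥S, (μ.restrict (T ⁻¹' {(s:X)})) E = μ (E ∩ T ⁻¹' {(s:X)}) :=
    fun s => Measure.restrict_apply hE
  rw [Finset.sum_congr rfl fun s _ => h1 s]
  rw [← measure_biUnion_finset
    ((preim_disjoint T S).mono (fun s => Set.inter_subset_right))
    (fun s _ => hE.inter (hT (measurableSet_singleton _)))]
  congr 1
  rw [← Set.inter_iUnion₂, preim_cover T S hTS, Set.inter_univ]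

lemma sum_toReal_partition (μ : Measure X) [IsProbabilityMeasure μ] (T : X → X)
    (hT : Measurable T) (S : Finset X) (hTS : ∀ x, T x ∈ S) :
    ∑ s : ↥S, (μ (T ⁻¹' {(s : X)})).toReal = 1 := by
  rw [← ENNReal.toReal_sum (fun s _ => measure_ne_top μ _)]
  rw [← measure_biUnion_finset (preim_disjoint T S)
    (fun s _ => hT (measurableSet_singleton _))]
  rw [preim_cover T S hTS]
  simp

lemma integral_partition (μ : Measure X) (T : X → X) (hT : Measurable T)
    (S : Finset X) (hTS : ∀ x, T x ∈ S) (h : X → ℝ) (hint : Integrable h μ) :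
    ∫ x, h x ∂μ = ∑ s : ↥S, ∫ x in T ⁻¹' {(s : X)}, h x ∂μ := by
  rw [← MeasureTheory.setIntegral_univ (μ := μ) (f := h), ← preim_cover T S hTS,
    integral_biUnion_finset Finset.univ (fun s _ => hT (measurableSet_singleton _))
      (preim_disjoint T S) (fun s _ => hint.integrableOn)]

lemma dist_to_integrable (x₀ c : X) (μ : Measure X) [IsProbabilityMeasure μ]
    (hint : Integrable (fun x => dist x₀ x) μ) :
    Integrable (fun x => dist x c) μ := by
  refine Integrable.mono' (g := fun x => dist x₀ x + dist x₀ c)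
    (hint.add (integrable_const _))
    (Continuous.aestronglyMeasurable (by fun_prop))
    (Filter.Eventually.of_forall fun x => ?_)
  rw [Real.norm_eq_abs, abs_of_nonneg dist_nonneg]
  calc dist x c ≤ dist x x₀ + dist x₀ c := dist_triangle _ _ _
    _ = dist x₀ x + dist x₀ c := by rw [dist_comm]

lemma distT_integrable (x₀ : X) (μ : Measure X) [IsProbabilityMeasure μ]
    (hint : Integrable (fun x => dist x₀ x) μ)
    (T : X → X) (hT : Measurable T) (S : Finset X) (hTS : ∀ x, T x ∈ S) :
    Integrable (fun x => dist x (T x)) μ := by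
  haveI : SecondCountableTopology X := UniformSpace.secondCountable_of_separable X
  have hSne : S.Nonempty := ⟨T x₀, hTS x₀⟩
  set C : ℝ := S.sup' hSne (fun y => dist x₀ y) with hC
  refine Integrable.mono' (g := fun x => dist x₀ x + C)
    (hint.add (integrable_const _))
    ((measurable_id.dist hT).aestronglyMeasurable)
    (Filter.Eventually.of_forall fun x => ?_)
  rw [Real.norm_eq_abs, abs_of_nonneg dist_nonneg]
  have h2 : dist x₀ (T x) ≤ C := Finset.le_sup' (fun y => dist x₀ y) (hTS x)
  calc dist x (T x) ≤ dist x x₀ + dist x₀ (T x) := dist_triangle _ _ _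
    _ ≤ dist x₀ x + C := by rw [dist_comm x x₀]; linarith

lemma lift_coupling (x₀ : X) (μ ν : Measure X) (hμ : MemP1 x₀ μ) (hν : MemP1 x₀ ν)
    (T : X → X) (hT : Measurable T) (S : Finset X) (hTS : ∀ x, T x ∈ S)
    (p : (↥S × ↥S) → ℝ)
    (hp : p ∈ Cpl (fun s : ↥S => (μ (T ⁻¹' {(s:X)})).toReal)
      (fun t : ↥S => (ν (T ⁻¹' {(t:X)})).toReal)) :
    ∃ π : Measure (X × X), IsProbabilityMeasure π ∧ π.map Prod.fst = μ ∧ π.map Prod.snd = ν ∧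
      ∫ q, dist q.1 q.2 ∂π ≤ cost (fun s : ↥S => (s : X)) p
        + ∫ x, dist x (T x) ∂μ + ∫ x, dist x (T x) ∂ν := by
  classical
  haveI : SecondCountableTopology X := UniformSpace.secondCountable_of_separable X
  haveI := hμ.1
  haveI := hν.1
  set A : ↥S → Set X := fun s => T ⁻¹' {(s:X)} with hA
  have hAm : ∀ s, MeasurableSet (A s) := fun s => hT (measurableSet_singleton _)
  set a : ↥S → ℝ := fun s => (μ (A s)).toReal with ha
  set b : ↥S → ℝ := fun t => (ν (A t)).toReal with hb
  have han : ∀ s, 0 ≤ a s := fun s => ENNReal.toReal_nonneg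
  have hbn : ∀ t, 0 ≤ b t := fun t => ENNReal.toReal_nonneg
  have hμA : ∀ s, μ (A s) = ENNReal.ofReal (a s) :=
    fun s => (ENNReal.ofReal_toReal (measure_ne_top μ _)).symm
  have hνA : ∀ t, ν (A t) = ENNReal.ofReal (b t) :=
    fun t => (ENNReal.ofReal_toReal (measure_ne_top ν _)).symm
  set w : (↥S × ↥S) → ℝ := fun z => p z / (a z.1 * b z.2) with hw
  have hwn : ∀ z, 0 ≤ w z := fun z => div_nonneg (hp.1 z) (mul_nonneg (han _) (hbn _))
  set m : (↥S × ↥S) → Measure (X × X) := fun z =>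
    (ENNReal.ofReal (w z)) • ((μ.restrict (A z.1)).prod (ν.restrict (A z.2))) with hm
  set π : Measure (X × X) := ∑ z : ↥S × ↥S, m z with hπ
  have hrow0 : ∀ z : ↥S × ↥S, a z.1 = 0 → p z = 0 := by
    intro z h0
    have hsum : ∑ t, p (z.1, t) = 0 := by rw [hp.2.1 z.1]; exact h0
    have := (Finset.sum_eq_zero_iff_of_nonneg (fun t _ => hp.1 (z.1, t))).mp hsum z.2
      (Finset.mem_univ _)
    simpa using this
  have hcol0 : ∀ z : ↥S × ↥S, b z.2 = 0 → p z = 0 := by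
    intro z h0
    have hsum : ∑ s, p (s, z.2) = 0 := by rw [hp.2.2 z.2]; exact h0
    have := (Finset.sum_eq_zero_iff_of_nonneg (fun s _ => hp.1 (s, z.2))).mp hsum z.1
      (Finset.mem_univ _)
    simpa using this
  have hw0 : ∀ z : ↥S × ↥S, a z.1 = 0 ∨ b z.2 = 0 → w z = 0 := by
    intro z h0
    rcases h0 with h|h
    · rw [hw]; simp only []; rw [hrow0 z h, zero_div]
    · rw [hw]; simp only []; rw [hcol0 z h, zero_div]
  have hres0μ : ∀ s, a s = 0 → μ.restrict (A s) = 0 := by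
    intro s h0
    rw [Measure.restrict_eq_zero, hμA s, h0, ENNReal.ofReal_zero]
  have hres0ν : ∀ t, b t = 0 → ν.restrict (A t) = 0 := by
    intro t h0
    rw [Measure.restrict_eq_zero, hνA t, h0, ENNReal.ofReal_zero]
  -- the marginals
  have hmapfst : π.map Prod.fst = μ := by
    rw [hπ, map_finset_sum' measurable_fst]
    have hz : ∀ z : ↥S × ↥S, (m z).map Prod.fst
        = (ENNReal.ofReal (w z) * ν (A z.2)) • μ.restrict (A z.1) := by
      intro z
      rw [hm]
      simp only []
      rw [Measure.map_smul, Measure.map_fst_prod, Measure.restrict_apply_univ, smul_smul]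
    rw [Finset.sum_congr rfl fun z _ => hz z]
    rw [Fintype.sum_prod_type]
    have hcoeff : ∀ s : ↥S,
        ∑ t : ↥S, (ENNReal.ofReal (w (s, t)) * ν (A t)) • μ.restrict (A s)
          = μ.restrict (A s) := by
      intro s
      rw [← Finset.sum_smul]
      by_cases h0 : a s = 0
      · rw [hres0μ s h0]
        simp
      · have hone : ∑ t : ↥S, ENNReal.ofReal (w (s, t)) * ν (A t) = 1 := by
          have hterm : ∀ t : ↥S, ENNReal.ofReal (w (s, t)) * ν (A t)
              = ENNReal.ofReal (p (s, t) / a s) := by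
            intro t
            rw [hνA t, ← ENNReal.ofReal_mul (hwn (s, t))]
            congr 1
            by_cases hbt : b t = 0
            · rw [hbt, mul_zero, hcol0 (s, t) hbt, zero_div]
            · rw [hw]
              simp only []
              field_simp
          rw [Finset.sum_congr rfl fun t _ => hterm t,
            ← ENNReal.ofReal_sum_of_nonneg (fun t _ => div_nonneg (hp.1 (s, t)) (han s)),
            ← Finset.sum_div, hp.2.1 s, div_self h0, ENNReal.ofReal_one]
        rw [hone, one_smul]
    rw [Finset.sum_congr rfl fun s _ => hcoeff s]
    exact sum_measure_partition μ T hT S hTS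
  have hmapsnd : π.map Prod.snd = ν := by
    rw [hπ, map_finset_sum' measurable_snd]
    have hz : ∀ z : ↥S × ↥S, (m z).map Prod.snd
        = (ENNReal.ofReal (w z) * μ (A z.1)) • ν.restrict (A z.2) := by
      intro z
      rw [hm]
      simp only []
      rw [Measure.map_smul, Measure.map_snd_prod, Measure.restrict_apply_univ, smul_smul]
    rw [Finset.sum_congr rfl fun z _ => hz z]
    rw [Fintype.sum_prod_type_right]
    have hcoeff : ∀ t : ↥S,
        ∑ s : ↥S, (ENNReal.ofReal (w (s, t)) * μ (A s)) • ν.restrict (A t)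
          = ν.restrict (A t) := by
      intro t
      rw [← Finset.sum_smul]
      by_cases h0 : b t = 0
      · rw [hres0ν t h0]
        simp
      · have hone : ∑ s : ↥S, ENNReal.ofReal (w (s, t)) * μ (A s) = 1 := by
          have hterm : ∀ s : ↥S, ENNReal.ofReal (w (s, t)) * μ (A s)
              = ENNReal.ofReal (p (s, t) / b t) := by
            intro s
            rw [hμA s, ← ENNReal.ofReal_mul (hwn (s, t))]
            congr 1
            by_cases has : a s = 0
            · rw [has, mul_zero, hrow0 (s, t) has, zero_div]
            · rw [hw]
              simp only []
              field_simp
          rw [Finset.sum_congr rfl fun s _ => hterm s,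
            ← ENNReal.ofReal_sum_of_nonneg (fun s _ => div_nonneg (hp.1 (s, t)) (hbn t)),
            ← Finset.sum_div, hp.2.2 t, div_self h0, ENNReal.ofReal_one]
        rw [hone, one_smul]
    rw [Finset.sum_congr rfl fun t _ => hcoeff t]
    exact sum_measure_partition ν T hT S hTS
  -- probability measure
  have ha1 : ∑ s : ↥S, a s = 1 := sum_toReal_partition μ T hT S hTS
  have hπuniv : π Set.univ = 1 := by
    rw [hπ, Measure.finset_sum_apply]
    have hz : ∀ z : ↥S × ↥S, (m z) Set.univ = ENNReal.ofReal (p z) := by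
      intro z
      rw [hm]
      simp only [Measure.smul_apply, smul_eq_mul]
      rw [← Set.univ_prod_univ, Measure.prod_prod, Measure.restrict_apply_univ,
        Measure.restrict_apply_univ, hμA, hνA]
      by_cases h0 : a z.1 = 0 ∨ b z.2 = 0
      · have hp0 : p z = 0 := by
          rcases h0 with h|h
          exacts [hrow0 z h, hcol0 z h]
        rw [hw0 z h0, hp0]
        simp
      · push_neg at h0
        rw [← ENNReal.ofReal_mul (han z.1), ← ENNReal.ofReal_mul (hwn z)]
        congr 1
        rw [hw]
        simp only []
        rw [div_mul_cancel₀ _ (mul_ne_zero h0.1 h0.2)]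
    rw [Finset.sum_congr rfl fun z _ => hz z,
      ← ENNReal.ofReal_sum_of_nonneg (fun z _ => hp.1 z)]
    have : ∑ z : ↥S × ↥S, p z = 1 := by
      rw [Fintype.sum_prod_type]
      calc ∑ s : ↥S, ∑ t : ↥S, p (s, t) = ∑ s : ↥S, a s :=
            Finset.sum_congr rfl fun s _ => hp.2.1 s
        _ = 1 := ha1
    rw [this, ENNReal.ofReal_one]
  -- cost estimate
  set Iμ : ↥S → ℝ := fun s => ∫ x in A s, dist x (s:X) ∂μ with hIμ
  set Iν : ↥S → ℝ := fun t => ∫ y in A t, dist y (t:X) ∂ν with hIν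
  have hIμnn : ∀ s, 0 ≤ Iμ s := fun s => integral_nonneg (fun x => dist_nonneg)
  have hIνnn : ∀ t, 0 ≤ Iν t := fun t => integral_nonneg (fun x => dist_nonneg)
  have hIμ0 : ∀ s, a s = 0 → Iμ s = 0 := by
    intro s h0
    rw [hIμ]
    simp only []
    rw [hres0μ s h0]
    exact integral_zero_measure _
  have hIν0 : ∀ t, b t = 0 → Iν t = 0 := by
    intro t h0
    rw [hIν]
    simp only []
    rw [hres0ν t h0]
    exact integral_zero_measure _
  have hdμ : Integrable (fun x => dist x (T x)) μ := distT_integrable x₀ μ hμ.2 T hT S hTS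
  have hdν : Integrable (fun x => dist x (T x)) ν := distT_integrable x₀ ν hν.2 T hT S hTS
  have hIμsum : ∑ s : ↥S, Iμ s = ∫ x, dist x (T x) ∂μ := by
    rw [integral_partition μ T hT S hTS _ hdμ]
    apply Finset.sum_congr rfl
    intro s _
    exact setIntegral_congr_fun (hAm s) (fun x hx => by
      rw [show T x = (s:X) from hx])
  have hIνsum : ∑ t : ↥S, Iν t = ∫ y, dist y (T y) ∂ν := by
    rw [integral_partition ν T hT S hTS _ hdν]
    apply Finset.sum_congr rfl
    intro t _
    exact setIntegral_congr_fun (hAm t) (fun y hy => by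
      rw [show T y = (t:X) from hy])
  have hterm : ∀ z : ↥S × ↥S,
      Integrable (fun q : X × X => dist q.1 q.2) (m z) ∧
      ∫ q : X × X, dist q.1 q.2 ∂(m z)
        ≤ w z * b z.2 * Iμ z.1 + p z * dist (z.1 : X) (z.2 : X) + w z * a z.1 * Iν z.2 := by
    rintro ⟨s, t⟩
    have hg1 : Integrable (fun x => dist x (s:X)) (μ.restrict (A s)) :=
      (dist_to_integrable x₀ _ μ hμ.2).restrict
    have hg2 : Integrable (fun y => dist y (t:X)) (ν.restrict (A t)) :=
      (dist_to_integrable x₀ _ ν hν.2).restrict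
    set P : Measure (X × X) := (μ.restrict (A s)).prod (ν.restrict (A t)) with hP
    have hmapP1 : P.map Prod.fst = ν (A t) • μ.restrict (A s) := by
      rw [hP, Measure.map_fst_prod, Measure.restrict_apply_univ]
    have hmapP2 : P.map Prod.snd = μ (A s) • ν.restrict (A t) := by
      rw [hP, Measure.map_snd_prod, Measure.restrict_apply_univ]
    have hg1P : Integrable (fun q : X × X => dist q.1 (s:X)) P := by
      have h1 : Integrable (fun x => dist x (s:X)) (P.map Prod.fst) := by
        rw [hmapP1]
        exact hg1.smul_measure (measure_ne_top _ _)
      exact (integrable_map_measure (Continuous.aestronglyMeasurable (by fun_prop))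
        measurable_fst.aemeasurable).mp h1
    have hg2P : Integrable (fun q : X × X => dist q.2 (t:X)) P := by
      have h1 : Integrable (fun y => dist y (t:X)) (P.map Prod.snd) := by
        rw [hmapP2]
        exact hg2.smul_measure (measure_ne_top _ _)
      exact (integrable_map_measure (Continuous.aestronglyMeasurable (by fun_prop))
        measurable_snd.aemeasurable).mp h1
    have hboundP : Integrable (fun q : X × X =>
        dist q.1 (s:X) + dist (s:X) (t:X) + dist q.2 (t:X)) P :=
      (hg1P.add (integrable_const _)).add hg2P
    have htri : ∀ q : X × X, dist q.1 q.2
        ≤ dist q.1 (s:X) + dist (s:X) (t:X) + dist q.2 (t:X) := by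
      intro q
      have := dist_triangle4 q.1 (s:X) (t:X) q.2
      have h2 : dist (t:X) q.2 = dist q.2 (t:X) := dist_comm _ _
      linarith
    have hdP : Integrable (fun q : X × X => dist q.1 q.2) P := by
      refine Integrable.mono' hboundP (Continuous.aestronglyMeasurable (by fun_prop))
        (Filter.Eventually.of_forall fun q => ?_)
      rw [Real.norm_eq_abs, abs_of_nonneg dist_nonneg]
      exact htri q
    have hint1 : ∫ q : X × X, dist q.1 (s:X) ∂P = b t * Iμ s := by
      have hcont1 : Continuous (fun x : X => dist x (s:X)) :=
        continuous_id.dist continuous_const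
      have he : ∫ q : X × X, dist q.1 (s:X) ∂P = ∫ x, dist x (s:X) ∂(P.map Prod.fst) :=
        (integral_map measurable_fst.aemeasurable hcont1.aestronglyMeasurable).symm
      rw [he, hmapP1, integral_smul_measure, smul_eq_mul]
    have hint3 : ∫ q : X × X, dist q.2 (t:X) ∂P = a s * Iν t := by
      have hcont3 : Continuous (fun y : X => dist y (t:X)) :=
        continuous_id.dist continuous_const
      have he : ∫ q : X × X, dist q.2 (t:X) ∂P = ∫ y, dist y (t:X) ∂(P.map Prod.snd) :=
        (integral_map measurable_snd.aemeasurable hcont3.aestronglyMeasurable).symm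
      rw [he, hmapP2, integral_smul_measure, smul_eq_mul]
    have hPuniv : (P Set.univ).toReal = a s * b t := by
      rw [hP, ← Set.univ_prod_univ, Measure.prod_prod, Measure.restrict_apply_univ,
        Measure.restrict_apply_univ, ENNReal.toReal_mul]
    have hint2 : ∫ _ : X × X, dist (s:X) (t:X) ∂P = a s * b t * dist (s:X) (t:X) := by
      rw [integral_const, measureReal_def, hPuniv]
      simp [mul_assoc]
    have hintP : ∫ q : X × X, (dist q.1 (s:X) + dist (s:X) (t:X) + dist q.2 (t:X)) ∂P
        = b t * Iμ s + a s * b t * dist (s:X) (t:X) + a s * Iν t := by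
      have hc : Integrable (fun q : X × X => dist q.1 (s:X) + dist (s:X) (t:X)) P := by
        exact hg1P.add (integrable_const _)
      have e1 : ∫ q : X × X, (dist q.1 (s:X) + dist (s:X) (t:X) + dist q.2 (t:X)) ∂P
          = (∫ q : X × X, (dist q.1 (s:X) + dist (s:X) (t:X)) ∂P)
            + ∫ q : X × X, dist q.2 (t:X) ∂P := integral_add hc hg2P
      have e2 : ∫ q : X × X, (dist q.1 (s:X) + dist (s:X) (t:X)) ∂P
          = (∫ q : X × X, dist q.1 (s:X) ∂P) + ∫ _ : X × X, dist (s:X) (t:X) ∂P :=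
        integral_add hg1P (integrable_const _)
      rw [e1, e2, hint1, hint2, hint3]
    have hPle : ∫ q : X × X, dist q.1 q.2 ∂P
        ≤ b t * Iμ s + a s * b t * dist (s:X) (t:X) + a s * Iν t := by
      rw [← hintP]
      exact integral_mono hdP hboundP htri
    constructor
    · exact hdP.smul_measure ENNReal.ofReal_ne_top
    · have hms : ∫ q : X × X, dist q.1 q.2 ∂(m (s, t))
          = w (s, t) * ∫ q : X × X, dist q.1 q.2 ∂P := by
        rw [hm]
        simp only []
        rw [integral_smul_measure, ENNReal.toReal_ofReal (hwn (s, t))]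
        rfl
      rw [hms]
      by_cases h0 : a s = 0 ∨ b t = 0
      · have hw0' : w (s, t) = 0 := hw0 (s, t) h0
        have hp0 : p (s, t) = 0 := by
          rcases h0 with h|h
          exacts [hrow0 (s, t) h, hcol0 (s, t) h]
        rw [hw0', hp0]
        simp
      · push_neg at h0
        have hwab : w (s, t) * (a s * b t) = p (s, t) := by
          rw [hw]
          simp only []
          exact div_mul_cancel₀ _ (mul_ne_zero h0.1 h0.2)
        have hPnn : 0 ≤ ∫ q : X × X, dist q.1 q.2 ∂P :=
          integral_nonneg (fun q => dist_nonneg)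
        calc w (s, t) * ∫ q : X × X, dist q.1 q.2 ∂P
            ≤ w (s, t) * (b t * Iμ s + a s * b t * dist (s:X) (t:X) + a s * Iν t) :=
              mul_le_mul_of_nonneg_left hPle (hwn (s, t))
          _ = w (s, t) * b t * Iμ s + (w (s, t) * (a s * b t)) * dist (s:X) (t:X)
              + w (s, t) * a s * Iν t := by ring
          _ = w (s, t) * b t * Iμ s + p (s, t) * dist (s:X) (t:X)
              + w (s, t) * a s * Iν t := by rw [hwab]
  -- sum up
  have hintsum : ∫ q : X × X, dist q.1 q.2 ∂π = ∑ z : ↥S × ↥S, ∫ q, dist q.1 q.2 ∂(m z) := by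
    rw [hπ]
    exact integral_finset_sum_measure (fun z _ => (hterm z).1)
  refine ⟨π, ⟨hπuniv⟩, hmapfst, hmapsnd, ?_⟩
  have hT1 : ∑ z : ↥S × ↥S, w z * b z.2 * Iμ z.1 = ∫ x, dist x (T x) ∂μ := by
    rw [Fintype.sum_prod_type, ← hIμsum]
    apply Finset.sum_congr rfl
    intro s _
    dsimp only
    rw [← Finset.sum_mul]
    by_cases h0 : a s = 0
    · rw [hIμ0 s h0, mul_zero]
    · have : ∑ t : ↥S, w (s, t) * b t = 1 := by
        have hterm2 : ∀ t : ↥S, w (s, t) * b t = p (s, t) / a s := by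
          intro t
          by_cases hbt : b t = 0
          · rw [hbt, mul_zero, hcol0 (s, t) hbt, zero_div]
          · rw [hw]
            simp only []
            field_simp
        rw [Finset.sum_congr rfl fun t _ => hterm2 t, ← Finset.sum_div, hp.2.1 s,
          div_self h0]
      rw [this, one_mul]
  have hT3 : ∑ z : ↥S × ↥S, w z * a z.1 * Iν z.2 = ∫ y, dist y (T y) ∂ν := by
    rw [Fintype.sum_prod_type_right, ← hIνsum]
    apply Finset.sum_congr rfl
    intro t _
    dsimp only
    rw [← Finset.sum_mul]
    by_cases h0 : b t = 0
    · rw [hIν0 t h0, mul_zero]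
    · have : ∑ s : ↥S, w (s, t) * a s = 1 := by
        have hterm2 : ∀ s : ↥S, w (s, t) * a s = p (s, t) / b t := by
          intro s
          by_cases has : a s = 0
          · rw [has, mul_zero, hrow0 (s, t) has, zero_div]
          · rw [hw]
            simp only []
            field_simp
        rw [Finset.sum_congr rfl fun s _ => hterm2 s, ← Finset.sum_div, hp.2.2 t,
          div_self h0]
      rw [this, one_mul]
  have hT2 : ∑ z : ↥S × ↥S, p z * dist (z.1 : X) (z.2 : X) = cost (fun s : ↥S => (s:X)) p := by
    unfold cost
    exact Finset.sum_congr rfl fun z _ => by ring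
  rw [hintsum]
  calc ∑ z : ↥S × ↥S, ∫ q, dist q.1 q.2 ∂(m z)
      ≤ ∑ z : ↥S × ↥S, (w z * b z.2 * Iμ z.1 + p z * dist (z.1 : X) (z.2 : X)
          + w z * a z.1 * Iν z.2) := Finset.sum_le_sum (fun z _ => (hterm z).2)
    _ = (∑ z : ↥S × ↥S, w z * b z.2 * Iμ z.1)
        + (∑ z : ↥S × ↥S, p z * dist (z.1 : X) (z.2 : X))
        + (∑ z : ↥S × ↥S, w z * a z.1 * Iν z.2) := by
          rw [Finset.sum_add_distrib, Finset.sum_add_distrib]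
    _ = cost (fun s : ↥S => (s:X)) p + ∫ x, dist x (T x) ∂μ + ∫ y, dist y (T y) ∂ν := by
          rw [hT1, hT2, hT3]
          ring

end Lift

/-- Kantorovich–Rubinstein duality: `W₁(μ,ν)` equals the supremum of `∫ f dμ − ∫ f dν`
over all 1-Lipschitz functions `f`. -/
theorem stmt_6 {X : Type*} [MetricSpace X] [TopologicalSpace.SeparableSpace X]
    [CompleteSpace X] [MeasurableSpace X] [BorelSpace X] (x₀ : X)
    (μ ν : Measure X) (hμ : MemP1 x₀ μ) (hν : MemP1 x₀ ν) :
    W1 μ ν = sSup {c : ℝ | ∃ f : X → ℝ, LipschitzWith 1 f ∧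
      c = ∫ x, f x ∂μ - ∫ x, f x ∂ν} := by
  classical
  haveI : SecondCountableTopology X := UniformSpace.secondCountable_of_separable X
  haveI := hμ.1
  haveI := hν.1
  set SW : Set ℝ := {c : ℝ | ∃ π : Measure (X × X), IsProbabilityMeasure π ∧
    π.map Prod.fst = μ ∧ π.map Prod.snd = ν ∧ c = ∫ p, dist p.1 p.2 ∂π} with hSW
  set TW : Set ℝ := {c : ℝ | ∃ f : X → ℝ, LipschitzWith 1 f ∧
    c = ∫ x, f x ∂μ - ∫ x, f x ∂ν} with hTW
  have hprod1 : (μ.prod ν).map Prod.fst = μ := by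
    rw [Measure.map_fst_prod, measure_univ, one_smul]
  have hprod2 : (μ.prod ν).map Prod.snd = ν := by
    rw [Measure.map_snd_prod, measure_univ, one_smul]
  have hSW_ne : SW.Nonempty :=
    ⟨∫ p, dist p.1 p.2 ∂(μ.prod ν), μ.prod ν, inferInstance, hprod1, hprod2, rfl⟩
  have hTW_ne : TW.Nonempty := by
    refine ⟨0, fun _ => 0, (LipschitzWith.const 0).weaken zero_le_one, by simp⟩
  have hsep : ∀ t ∈ TW, ∀ c ∈ SW, t ≤ c := by
    rintro t ⟨f, hf, rfl⟩ c ⟨π, hπ, h1, h2, rfl⟩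
    exact dual_le_cost x₀ μ ν hμ hν π hπ h1 h2 f hf
  have hTW_bdd : BddAbove TW := by
    obtain ⟨c, hc⟩ := hSW_ne
    exact ⟨c, fun t ht => hsep t ht c hc⟩
  have hSW_bdd : BddBelow SW := by
    obtain ⟨t, ht⟩ := hTW_ne
    exact ⟨t, fun c hc => hsep t ht c hc⟩
  have hW1 : W1 μ ν = sInf SW := rfl
  rw [hW1]
  apply le_antisymm
  · apply le_of_forall_pos_le_add
    intro ε hε
    obtain ⟨T, S, hT, hTS, hx₀S, hdμ, hdν⟩ :=
      exists_discretization x₀ μ ν hμ hν (ε/4) (by positivity)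
    haveI : Nonempty ↥S := ⟨⟨x₀, hx₀S⟩⟩
    have hSne : S.Nonempty := ⟨x₀, hx₀S⟩
    set a : ↥S → ℝ := fun s => (μ (T ⁻¹' {(s:X)})).toReal with ha
    set b : ↥S → ℝ := fun t => (ν (T ⁻¹' {(t:X)})).toReal with hb
    have han : ∀ s, 0 ≤ a s := fun s => ENNReal.toReal_nonneg
    have hbn : ∀ t, 0 ≤ b t := fun t => ENNReal.toReal_nonneg
    have hsa : ∑ s : ↥S, a s = 1 := sum_toReal_partition μ T hT S hTS
    have hsb : ∑ t : ↥S, b t = 1 := sum_toReal_partition ν T hT S hTS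
    obtain ⟨f, pp, hlip, hppmem, hppcost⟩ :=
      finKR (fun s : ↥S => (s:X)) a b han hbn hsa hsb
    obtain ⟨π, hπ1, hπ2, hπ3, hπ4⟩ := lift_coupling x₀ μ ν hμ hν T hT S hTS pp hppmem
    -- integral of f ∘ T
    have hfT : ∀ (ρ : Measure X), IsProbabilityMeasure ρ →
        (∀ s : ↥S, True) →
        (Integrable (fun x => f (T x)) ρ ∧
          ∫ x, f (T x) ∂ρ = ∑ s : ↥S, f (s:X) * (ρ (T ⁻¹' {(s:X)})).toReal) := by
      intro ρ hρ _
      have hC : ∀ x, ‖f (T x)‖ ≤ S.sup' hSne (fun y => |f y|) := by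
        intro x
        rw [Real.norm_eq_abs]
        exact Finset.le_sup' (fun y => |f y|) (hTS x)
      have hint : Integrable (fun x => f (T x)) ρ := by
        refine Integrable.mono' (integrable_const _)
          ((hlip.continuous.measurable.comp hT).aestronglyMeasurable)
          (Filter.Eventually.of_forall hC)
      refine ⟨hint, ?_⟩
      rw [integral_partition ρ T hT S hTS _ hint]
      apply Finset.sum_congr rfl
      intro s _
      rw [setIntegral_congr_fun (hT (measurableSet_singleton _))
        (fun x hx => by simp only []; rw [show T x = (s:X) from hx] : Set.EqOn (fun x => f (T x))
          (fun _ => f (s:X)) (T ⁻¹' {(s:X)}))]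
      rw [setIntegral_const, smul_eq_mul, mul_comm]
      rfl
    obtain ⟨hfTμint, hfTμ⟩ := hfT μ hμ.1 (fun _ => trivial)
    obtain ⟨hfTνint, hfTν⟩ := hfT ν hν.1 (fun _ => trivial)
    have hsum_ab : ∑ s : ↥S, f (s:X) * (a s - b s)
        = ∫ x, f (T x) ∂μ - ∫ x, f (T x) ∂ν := by
      rw [hfTμ, hfTν, ← Finset.sum_sub_distrib]
      exact Finset.sum_congr rfl fun s _ => by ring
    -- compare ∫ f∘T with ∫ f
    have hfμint : Integrable f μ := lip_integrable x₀ μ hμ.2 f hlip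
    have hfνint : Integrable f ν := lip_integrable x₀ ν hν.2 f hlip
    have hdμint : Integrable (fun x => dist x (T x)) μ := distT_integrable x₀ μ hμ.2 T hT S hTS
    have hdνint : Integrable (fun x => dist x (T x)) ν := distT_integrable x₀ ν hν.2 T hT S hTS
    have hcmpμ : ∫ x, f (T x) ∂μ ≤ ∫ x, f x ∂μ + ε/4 := by
      have h1 : ∫ x, (f (T x) - f x) ∂μ ≤ ∫ x, dist x (T x) ∂μ := by
        apply integral_mono (hfTμint.sub hfμint) hdμint
        intro x
        have h := hlip.dist_le_mul (T x) x
        rw [Real.dist_eq] at h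
        have h2 := (le_abs_self (f (T x) - f x)).trans h
        simp only [NNReal.coe_one, one_mul] at h2
        calc f (T x) - f x ≤ dist (T x) x := h2
          _ = dist x (T x) := dist_comm _ _
      rw [integral_sub hfTμint hfμint] at h1
      linarith
    have hcmpν : ∫ x, f x ∂ν ≤ ∫ x, f (T x) ∂ν + ε/4 := by
      have h1 : ∫ x, (f x - f (T x)) ∂ν ≤ ∫ x, dist x (T x) ∂ν := by
        apply integral_mono (hfνint.sub hfTνint) hdνint
        intro x
        have h := hlip.dist_le_mul x (T x)
        rw [Real.dist_eq] at h
        have h2 := (le_abs_self (f x - f (T x))).trans h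
        simp only [NNReal.coe_one, one_mul] at h2
        exact h2
      rw [integral_sub hfνint hfTνint] at h1
      linarith
    have hmem : (∫ x, f x ∂μ - ∫ x, f x ∂ν) ∈ TW := ⟨f, hlip, rfl⟩
    have hle : ∫ x, f x ∂μ - ∫ x, f x ∂ν ≤ sSup TW := le_csSup hTW_bdd hmem
    have hinSW : (∫ q : X × X, dist q.1 q.2 ∂π) ∈ SW := ⟨π, hπ1, hπ2, hπ3, rfl⟩
    calc sInf SW ≤ ∫ q : X × X, dist q.1 q.2 ∂π := csInf_le hSW_bdd hinSW
      _ ≤ cost (fun s : ↥S => (s:X)) pp + ε/4 + ε/4 := by linarith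
      _ = ∑ s : ↥S, f (s:X) * (a s - b s) + ε/2 := by rw [hppcost]; ring
      _ = (∫ x, f (T x) ∂μ - ∫ x, f (T x) ∂ν) + ε/2 := by rw [hsum_ab]
      _ ≤ (∫ x, f x ∂μ - ∫ x, f x ∂ν) + ε := by linarith
      _ ≤ sSup TW + ε := by linarith
  · apply csSup_le hTW_ne
    intro t ht
    exact le_csInf hSW_ne (fun c hc => hsep t ht c hc)
end

section
/- Let (X, d) be a metric space. For a molecule m (a finitely supported function m : X → ℝ with Σ_x m(x) = 0), define ‖m‖_Æ = inf { Σᵢ |aᵢ| d(xᵢ, yᵢ) : m = Σᵢ aᵢ (1_{xᵢ} − 1_{yᵢ}) }. Then ‖m‖_Æ = sup over 1-Lipschitz f of Σ_x f(x) m(x), and in particular this supremum is attained. -/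
open scoped BigOperators Classical Pointwise
noncomputable section

/-- The Arens–Eells norm of a molecule, defined as the infimum over elementary
representations `m = Σᵢ aᵢ (1_{xᵢ} − 1_{yᵢ})` of `Σᵢ |aᵢ| d(xᵢ, yᵢ)`. -/
noncomputable def aeNorm {X : Type*} [MetricSpace X] (m : X → ℝ) : ℝ :=
  sInf {s : ℝ | ∃ (n : ℕ) (a : Fin n → ℝ) (x y : Fin n → X),
    (∀ z, m z = ∑ i, a i * ((if z = x i then (1 : ℝ) else 0) -
      (if z = y i then (1 : ℝ) else 0))) ∧
    s = ∑ i, |a i| * dist (x i) (y i)}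

namespace AEAux

variable {X : Type*} [MetricSpace X]

/-- The representation-cost set. -/
def repSet (m : X → ℝ) : Set ℝ :=
  {s : ℝ | ∃ (n : ℕ) (a : Fin n → ℝ) (x y : Fin n → X),
    (∀ z, m z = ∑ i, a i * ((if z = x i then (1 : ℝ) else 0) -
      (if z = y i then (1 : ℝ) else 0))) ∧
    s = ∑ i, |a i| * dist (x i) (y i)}

lemma aeNorm_def (m : X → ℝ) : aeNorm m = sInf (repSet m) := rfl

lemma repSet_nonneg {m : X → ℝ} : ∀ s ∈ repSet m, (0 : ℝ) ≤ s := by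
  rintro s ⟨n, a, x, y, -, rfl⟩
  exact Finset.sum_nonneg fun i _ => mul_nonneg (abs_nonneg _) dist_nonneg

lemma repSet_bddBelow (m : X → ℝ) : BddBelow (repSet m) :=
  ⟨0, fun s hs => repSet_nonneg s hs⟩

lemma repSet_nonempty {m : X → ℝ} (hfin : (Function.support m).Finite)
    (hsum : ∑ᶠ x, m x = 0) : (repSet m).Nonempty := by
  by_cases hm : m = 0
  · exact ⟨0, 0, fun i => 0, fun i => i.elim0, fun i => i.elim0, by simp [hm], by simp⟩
  · obtain ⟨x₀, hx₀⟩ := Function.support_nonempty_iff.mpr hm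
    set S := hfin.toFinset with hS
    set e : Fin S.card ≃ S := S.equivFin.symm with he
    refine ⟨_, S.card, fun i => m (e i), fun i => (e i : X), fun i => x₀, ?_, rfl⟩
    intro z
    show m z = ∑ i : Fin S.card, m (e i : X) * ((if z = (e i : X) then (1 : ℝ) else 0) -
      (if z = x₀ then (1 : ℝ) else 0))
    have hsplit : (∑ i : Fin S.card, m (e i : X) * ((if z = (e i : X) then (1 : ℝ) else 0) -
        (if z = x₀ then (1 : ℝ) else 0)))
        = ∑ w ∈ S, m w * ((if z = w then (1 : ℝ) else 0) -
          (if z = x₀ then (1 : ℝ) else 0)) := by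
      rw [← Finset.sum_coe_sort S (fun w => m w * ((if z = w then (1 : ℝ) else 0) -
        (if z = x₀ then (1 : ℝ) else 0)))]
      exact Fintype.sum_equiv e _ _ (fun i => rfl)
    rw [hsplit]
    have h1 : ∑ w ∈ S, m w * ((if z = w then (1 : ℝ) else 0) -
        (if z = x₀ then (1 : ℝ) else 0))
        = (∑ w ∈ S, m w * (if z = w then (1 : ℝ) else 0)) -
          (if z = x₀ then (1 : ℝ) else 0) * ∑ w ∈ S, m w := by
      rw [Finset.mul_sum, ← Finset.sum_sub_distrib]
      congr 1; ext w; ring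
    have hsum' : ∑ w ∈ S, m w = 0 := by
      rw [← finsum_eq_sum m hfin]; exact hsum
    have h2 : ∑ w ∈ S, m w * (if z = w then (1 : ℝ) else 0) = m z := by
      have : ∀ w, m w * (if z = w then (1 : ℝ) else 0)
          = if w = z then m w else 0 := by
        intro w; by_cases h : z = w
        · rw [if_pos h, if_pos h.symm, mul_one]
        · rw [if_neg h, if_neg (fun hw => h hw.symm), mul_zero]
      rw [Finset.sum_congr rfl fun w _ => this w, Finset.sum_ite_eq' S z m]
      by_cases hz : z ∈ S
      · simp [hz]
      · simp only [hz, if_false]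
        have : m z = 0 := by
          by_contra h
          exact hz (by simpa [hS] using h)
        exact this.symm
    rw [h1, h2, hsum', mul_zero, sub_zero]

/-- A single elementary molecule has cost at most `dist x y`. -/
lemma aeNorm_pair_le (x y : X) :
    aeNorm (fun z => (if z = x then (1 : ℝ) else 0) - (if z = y then (1 : ℝ) else 0))
      ≤ dist x y := by
  apply csInf_le (repSet_bddBelow _)
  refine ⟨1, fun _ => 1, fun _ => x, fun _ => y, fun z => by simp, by simp⟩

/-- The key pairing bound: a 1-Lipschitz functional evaluated on any representation. -/
lemma pairing_le {m f : X → ℝ} (hf : LipschitzWith 1 f)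
    {n : ℕ} {a : Fin n → ℝ} {x y : Fin n → X}
    (hrep : ∀ z, m z = ∑ i, a i * ((if z = x i then (1 : ℝ) else 0) -
      (if z = y i then (1 : ℝ) else 0))) :
    ∑ᶠ z, f z * m z ≤ ∑ i, |a i| * dist (x i) (y i) := by
  classical
  set T : Finset X := Finset.image x Finset.univ ∪ Finset.image y Finset.univ with hT
  have hxT : ∀ i, x i ∈ T := fun i =>
    Finset.mem_union_left _ (Finset.mem_image_of_mem x (Finset.mem_univ i))
  have hyT : ∀ i, y i ∈ T := fun i =>
    Finset.mem_union_right _ (Finset.mem_image_of_mem y (Finset.mem_univ i))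
  have hsupp : Function.support (fun z => f z * m z) ⊆ (T : Set X) := by
    intro z hz
    have hmz : m z ≠ 0 := by
      intro h; apply hz; simp [Function.mem_support, h]
    rw [hrep z] at hmz
    obtain ⟨i, -, hi⟩ := Finset.exists_ne_zero_of_sum_ne_zero hmz
    by_contra hzT
    have hzx : z ≠ x i := fun h => hzT (h ▸ hxT i)
    have hzy : z ≠ y i := fun h => hzT (h ▸ hyT i)
    simp [hzx, hzy] at hi
  rw [finsum_eq_sum_of_support_subset _ hsupp]
  have hswap : ∑ z ∈ T, f z * m z
      = ∑ i, ∑ z ∈ T, f z * (a i * ((if z = x i then (1 : ℝ) else 0) -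
        (if z = y i then (1 : ℝ) else 0))) := by
    rw [Finset.sum_comm]
    refine Finset.sum_congr rfl fun z _ => ?_
    rw [hrep z, Finset.mul_sum]
  rw [hswap]
  apply Finset.sum_le_sum
  intro i _
  have hinner : ∑ z ∈ T, f z * (a i * ((if z = x i then (1 : ℝ) else 0) -
      (if z = y i then (1 : ℝ) else 0))) = a i * (f (x i) - f (y i)) := by
    have expand : ∀ z, f z * (a i * ((if z = x i then (1 : ℝ) else 0) -
        (if z = y i then (1 : ℝ) else 0)))
        = (if z = x i then a i * f z else 0) - (if z = y i then a i * f z else 0) := by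
      intro z
      by_cases h1 : z = x i <;> by_cases h2 : z = y i
      · simp only [if_pos h1, if_pos h2]; ring
      · simp only [if_pos h1, if_neg h2]; ring
      · simp only [if_neg h1, if_pos h2]; ring
      · simp only [if_neg h1, if_neg h2]; ring
    rw [Finset.sum_congr rfl fun z _ => expand z, Finset.sum_sub_distrib,
      Finset.sum_ite_eq' T (x i) (fun z => a i * f z),
      Finset.sum_ite_eq' T (y i) (fun z => a i * f z), if_pos (hxT i), if_pos (hyT i)]
    ring
  rw [hinner]
  calc a i * (f (x i) - f (y i)) ≤ |a i * (f (x i) - f (y i))| := le_abs_self _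
    _ = |a i| * |f (x i) - f (y i)| := abs_mul _ _
    _ ≤ |a i| * dist (x i) (y i) := by
        apply mul_le_mul_of_nonneg_left _ (abs_nonneg _)
        have := hf.dist_le_mul (x i) (y i)
        rwa [Real.dist_eq, NNReal.coe_one, one_mul] at this

lemma aeNorm_ge_pairing {m : X → ℝ} (hfin : (Function.support m).Finite)
    (hsum : ∑ᶠ x, m x = 0) {f : X → ℝ} (hf : LipschitzWith 1 f) :
    ∑ᶠ z, f z * m z ≤ aeNorm m := by
  apply le_csInf (repSet_nonempty hfin hsum)
  rintro s ⟨n, a, x, y, hrep, rfl⟩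
  exact pairing_le hf hrep

lemma repSet_smul {m : X → ℝ} {c : ℝ} (hc : 0 < c) :
    repSet (c • m) = c • repSet m := by
  ext s
  constructor
  · rintro ⟨n, a, x, y, hrep, rfl⟩
    rw [Set.mem_smul_set]
    refine ⟨∑ i, |a i / c| * dist (x i) (y i),
      ⟨n, fun i => a i / c, x, y, ?_, rfl⟩, ?_⟩
    · intro z
      have h := hrep z
      simp only [Pi.smul_apply, smul_eq_mul] at h
      show m z = ∑ i, a i / c * ((if z = x i then (1 : ℝ) else 0) -
        (if z = y i then (1 : ℝ) else 0))
      have hstep : (∑ i, a i / c * ((if z = x i then (1 : ℝ) else 0) -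
          (if z = y i then (1 : ℝ) else 0)))
          = c⁻¹ * ∑ i, a i * ((if z = x i then (1 : ℝ) else 0) -
            (if z = y i then (1 : ℝ) else 0)) := by
        rw [Finset.mul_sum]
        exact Finset.sum_congr rfl fun i _ => by ring
      rw [hstep, ← h, inv_mul_cancel_left₀ (ne_of_gt hc)]
    · rw [smul_eq_mul, Finset.mul_sum]
      refine Finset.sum_congr rfl fun i _ => ?_
      rw [abs_div, abs_of_pos hc]
      field_simp
  · rw [Set.mem_smul_set]
    rintro ⟨t, ⟨n, a, x, y, hrep, rfl⟩, rfl⟩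
    refine ⟨n, fun i => c * a i, x, y, ?_, ?_⟩
    · intro z
      simp only [Pi.smul_apply, smul_eq_mul, hrep z, Finset.mul_sum]
      refine Finset.sum_congr rfl fun i _ => by ring
    · simp only [smul_eq_mul, Finset.mul_sum]
      refine Finset.sum_congr rfl fun i _ => ?_
      rw [abs_mul, abs_of_pos hc]; ring

lemma aeNorm_smul {m : X → ℝ} {c : ℝ} (hc : 0 < c) :
    aeNorm (c • m) = c * aeNorm m := by
  rw [aeNorm_def, aeNorm_def, repSet_smul hc, Real.sInf_smul_of_nonneg hc.le, smul_eq_mul]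

lemma repSet_add {m₁ m₂ : X → ℝ} {s₁ s₂ : ℝ} (h₁ : s₁ ∈ repSet m₁)
    (h₂ : s₂ ∈ repSet m₂) : s₁ + s₂ ∈ repSet (m₁ + m₂) := by
  obtain ⟨n₁, a₁, x₁, y₁, hr₁, rfl⟩ := h₁
  obtain ⟨n₂, a₂, x₂, y₂, hr₂, rfl⟩ := h₂
  refine ⟨n₁ + n₂, Fin.append a₁ a₂, Fin.append x₁ x₂, Fin.append y₁ y₂, ?_, ?_⟩
  · intro z
    rw [Fin.sum_univ_add]
    simp only [Fin.append_left, Fin.append_right, Pi.add_apply]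
    rw [← hr₁ z, ← hr₂ z]
  · rw [Fin.sum_univ_add]
    simp only [Fin.append_left, Fin.append_right]

lemma aeNorm_add_le {m₁ m₂ : X → ℝ} (h₁ : (repSet m₁).Nonempty)
    (h₂ : (repSet m₂).Nonempty) :
    aeNorm (m₁ + m₂) ≤ aeNorm m₁ + aeNorm m₂ := by
  have key : ∀ s₁ ∈ repSet m₁, ∀ s₂ ∈ repSet m₂, aeNorm (m₁ + m₂) ≤ s₁ + s₂ :=
    fun s₁ hs₁ s₂ hs₂ => csInf_le (repSet_bddBelow _) (repSet_add hs₁ hs₂)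
  have step1 : ∀ s₁ ∈ repSet m₁, aeNorm (m₁ + m₂) - s₁ ≤ aeNorm m₂ := by
    intro s₁ hs₁
    apply le_csInf h₂
    intro s₂ hs₂
    linarith [key s₁ hs₁ s₂ hs₂]
  have step2 : aeNorm (m₁ + m₂) - aeNorm m₂ ≤ aeNorm m₁ := by
    apply le_csInf h₁
    intro s₁ hs₁
    linarith [step1 s₁ hs₁]
  linarith

/-- The submodule of molecules. -/
def Mol (X : Type*) [MetricSpace X] : Submodule ℝ (X → ℝ) where
  carrier := {m | (Function.support m).Finite ∧ ∑ᶠ x, m x = 0}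
  add_mem' := by
    rintro a b ⟨ha1, ha2⟩ ⟨hb1, hb2⟩
    refine ⟨(ha1.union hb1).subset (Function.support_add _ _), ?_⟩
    have : ∑ᶠ x, (a + b) x = ∑ᶠ x, (a x + b x) := rfl
    rw [this, finsum_add_distrib ha1 hb1, ha2, hb2, add_zero]
  zero_mem' := by
    refine ⟨by simp [Function.support_zero], by simp⟩
  smul_mem' := by
    rintro c a ⟨h1, h2⟩
    constructor
    · apply h1.subset
      intro z hz
      simp only [Function.mem_support, Pi.smul_apply, smul_eq_mul] at hz
      simp only [Function.mem_support]
      intro h; apply hz; rw [h, mul_zero]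
    · have : ∑ᶠ x, (c • a) x = c • ∑ᶠ x, a x := (smul_finsum' c h1).symm
      rw [this, h2, smul_zero]

lemma pairFn_mem (x y : X) :
    (fun z => (if z = x then (1 : ℝ) else 0) - (if z = y then (1 : ℝ) else 0)) ∈ Mol X := by
  constructor
  · apply Set.Finite.subset ((Set.finite_singleton y).insert x)
    intro z hz
    simp only [Function.mem_support] at hz
    by_contra h
    simp only [Set.mem_insert_iff, Set.mem_singleton_iff, not_or] at h
    simp [h.1, h.2] at hz
  · by_cases hxy : x = y
    · subst hxy; simp
    · have hsupp : Function.support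
          (fun z => (if z = x then (1 : ℝ) else 0) - (if z = y then (1 : ℝ) else 0))
          ⊆ (({x, y} : Finset X) : Set X) := by
        intro z hz
        simp only [Function.mem_support] at hz
        by_contra h
        simp only [Finset.coe_insert, Finset.coe_singleton, Set.mem_insert_iff,
          Set.mem_singleton_iff, not_or] at h
        simp [h.1, h.2] at hz
      rw [finsum_eq_sum_of_support_subset _ hsupp, Finset.sum_insert (by simpa using hxy),
        Finset.sum_singleton]
      simp [hxy, Ne.symm hxy]

end AEAux

open AEAux in
/-- For a molecule `m` (finitely supported, values summing to zero), the Arens–Eells norm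
equals `sup { Σ_x f(x) m(x) : f 1-Lipschitz }`, and this supremum is attained. -/
theorem stmt_8 {X : Type*} [MetricSpace X] (m : X → ℝ)
    (hfin : (Function.support m).Finite) (hsum : ∑ᶠ x, m x = 0) :
    aeNorm m = sSup {t : ℝ | ∃ f : X → ℝ, LipschitzWith 1 f ∧ t = ∑ᶠ x, f x * m x} ∧
    ∃ f : X → ℝ, LipschitzWith 1 f ∧ (∑ᶠ x, f x * m x) = aeNorm m := by
  classical
  by_cases hm : m = 0
  · subst hm
    have h0mem : (0 : ℝ) ∈ repSet (0 : X → ℝ) :=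
      ⟨0, fun i => 0, fun i => i.elim0, fun i => i.elim0, by simp, by simp⟩
    have hae : aeNorm (0 : X → ℝ) = 0 :=
      le_antisymm (csInf_le (repSet_bddBelow _) h0mem)
        (le_csInf ⟨0, h0mem⟩ repSet_nonneg)
    have hT : {t : ℝ | ∃ f : X → ℝ, LipschitzWith 1 f ∧ t = ∑ᶠ x, f x * (0 : X → ℝ) x}
        = {0} := by
      ext t
      simp only [Set.mem_setOf_eq, Set.mem_singleton_iff]
      constructor
      · rintro ⟨f, -, rfl⟩; simp
      · rintro rfl
        exact ⟨fun _ => 0, (LipschitzWith.const 0).weaken (by norm_num), by simp⟩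
    refine ⟨by rw [hae, hT, csSup_singleton], fun _ => 0,
      (LipschitzWith.const 0).weaken (by norm_num), by simp [hae]⟩
  · obtain ⟨x₀, hx₀⟩ := Function.support_nonempty_iff.mpr hm
    have hmem : m ∈ Mol X := ⟨hfin, hsum⟩
    set m' : Mol X := ⟨m, hmem⟩ with hm'def
    have hm'0 : m' ≠ 0 := fun h => hm (congrArg Subtype.val h)
    set N : Mol X → ℝ := fun v => aeNorm (v : X → ℝ) with hNdef
    have hNE : ∀ v : Mol X, (repSet (v : X → ℝ)).Nonempty :=
      fun v => repSet_nonempty v.2.1 v.2.2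
    have hNnonneg : ∀ v : Mol X, 0 ≤ N v :=
      fun v => le_csInf (hNE v) repSet_nonneg
    have N_hom : ∀ c : ℝ, 0 < c → ∀ v : Mol X, N (c • v) = c * N v := by
      intro c hc v
      have : ((c • v : Mol X) : X → ℝ) = c • (v : X → ℝ) := rfl
      simp only [hNdef, this]
      exact aeNorm_smul hc
    have N_add : ∀ v w : Mol X, N (v + w) ≤ N v + N w := by
      intro v w
      have : ((v + w : Mol X) : X → ℝ) = (v : X → ℝ) + (w : X → ℝ) := rfl
      simp only [hNdef, this]
      exact aeNorm_add_le (hNE v) (hNE w)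
    have hN0 : N 0 = 0 := by
      have h0mem : (0 : ℝ) ∈ repSet ((0 : Mol X) : X → ℝ) :=
        ⟨0, fun i => 0, fun i => i.elim0, fun i => i.elim0, by simp, by simp⟩
      exact le_antisymm (csInf_le (repSet_bddBelow _) h0mem) (hNnonneg 0)
    obtain ⟨g, hg1, hg2⟩ := exists_extension_of_le_sublinear
      (LinearPMap.mkSpanSingleton m' (N m') hm'0) N N_hom N_add (by
        rintro ⟨v, hv⟩
        obtain ⟨t, ht⟩ := Submodule.mem_span_singleton.mp hv
        obtain rfl : v = t • m' := ht.symm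
        have hval : (LinearPMap.mkSpanSingleton m' (N m') hm'0) ⟨t • m', hv⟩ = t • N m' :=
          LinearPMap.mkSpanSingleton'_apply m' (N m') _ t hv
        rw [hval]
        rcases lt_trichotomy t 0 with htneg | htzero | htpos
        · have hle : t • N m' ≤ 0 := by
            rw [smul_eq_mul]
            exact mul_nonpos_of_nonpos_of_nonneg htneg.le (hNnonneg m')
          exact hle.trans (hNnonneg _)
        · subst htzero
          simp only [zero_smul, hN0, le_refl]
        · rw [N_hom t htpos m', smul_eq_mul])
    -- the optimal Lipschitz function
    set δ : X → Mol X := fun x => ⟨fun z => (if z = x then (1 : ℝ) else 0) -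
      (if z = x₀ then (1 : ℝ) else 0), pairFn_mem x x₀⟩ with hδdef
    set f : X → ℝ := fun x => g (δ x) with hfdef
    have hδdiff : ∀ p q : X, δ p - δ q
        = (⟨fun z => (if z = p then (1 : ℝ) else 0) - (if z = q then (1 : ℝ) else 0),
            pairFn_mem p q⟩ : Mol X) := by
      intro p q
      apply Subtype.ext
      funext z
      show ((fun z => (if z = p then (1:ℝ) else 0) - (if z = x₀ then (1:ℝ) else 0)) z)
        - ((fun z => (if z = q then (1:ℝ) else 0) - (if z = x₀ then (1:ℝ) else 0)) z)
        = (if z = p then (1:ℝ) else 0) - (if z = q then (1:ℝ) else 0)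
      ring
    have hflip : ∀ p q : X, f p - f q ≤ dist p q := by
      intro p q
      have : f p - f q = g (δ p - δ q) := by rw [map_sub]
      rw [this, hδdiff p q]
      calc g _ ≤ N _ := hg2 _
        _ ≤ dist p q := aeNorm_pair_le p q
    have hfLip : LipschitzWith 1 f := by
      apply LipschitzWith.of_dist_le_mul
      intro p q
      rw [Real.dist_eq, NNReal.coe_one, one_mul]
      rw [abs_sub_le_iff]
      exact ⟨hflip p q, by rw [dist_comm]; exact hflip q p⟩
    -- the pairing equals g m'
    set S : Finset X := hfin.toFinset with hSdef
    have hdecomp : m' = ∑ z ∈ S, m z • δ z := by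
      apply Subtype.ext
      have hcoe : ((∑ z ∈ S, m z • δ z : Mol X) : X → ℝ)
          = ∑ z ∈ S, m z • ((δ z : X → ℝ)) := by
        simp
      rw [hcoe]
      funext w
      rw [Finset.sum_apply]
      have hterm : ∀ z, (m z • ((δ z : X → ℝ))) w
          = m z * (if w = z then (1 : ℝ) else 0) - m z * (if w = x₀ then (1 : ℝ) else 0) := by
        intro z
        show m z * ((if w = z then (1:ℝ) else 0) - (if w = x₀ then (1:ℝ) else 0)) = _
        ring
      rw [Finset.sum_congr rfl fun z _ => hterm z, Finset.sum_sub_distrib]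
      have hsum' : ∑ w ∈ S, m w = 0 := by
        rw [← finsum_eq_sum m hfin]; exact hsum
      have h2 : ∑ z ∈ S, m z * (if w = z then (1 : ℝ) else 0) = m w := by
        have : ∀ z, m z * (if w = z then (1 : ℝ) else 0)
            = if z = w then m z else 0 := by
          intro z; by_cases h : w = z
          · rw [if_pos h, if_pos h.symm, mul_one]
          · rw [if_neg h, if_neg (fun hw => h hw.symm), mul_zero]
        rw [Finset.sum_congr rfl fun z _ => this z, Finset.sum_ite_eq' S w m]
        by_cases hw : w ∈ S
        · simp [hw]
        · simp only [hw, if_false]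
          have : m w = 0 := by
            by_contra h
            exact hw (by simpa [hSdef] using h)
          exact this.symm
      have h3 : ∑ z ∈ S, m z * (if w = x₀ then (1 : ℝ) else 0)
          = (if w = x₀ then (1 : ℝ) else 0) * ∑ z ∈ S, m z := by
        rw [Finset.mul_sum]
        exact Finset.sum_congr rfl fun z _ => by ring
      rw [h2, h3, hsum', mul_zero, sub_zero]
    have hgm' : g m' = ∑ z ∈ S, m z * f z := by
      rw [hdecomp, map_sum]
      exact Finset.sum_congr rfl fun z _ => by rw [map_smul, smul_eq_mul]
    have hpair : ∑ᶠ z, f z * m z = g m' := by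
      have hsupp : Function.support (fun z => f z * m z) ⊆ (S : Set X) := by
        intro z hz
        simp only [Function.mem_support] at hz
        have : m z ≠ 0 := fun h => hz (by rw [h, mul_zero])
        simpa [hSdef] using this
      rw [finsum_eq_sum_of_support_subset _ hsupp, hgm']
      exact Finset.sum_congr rfl fun z _ => by ring
    have hgval : g m' = aeNorm m := by
      have := hg1 ⟨m', Submodule.mem_span_singleton_self m'⟩
      rw [this, LinearPMap.mkSpanSingleton_apply]
    have hattain : ∑ᶠ z, f z * m z = aeNorm m := by rw [hpair, hgval]
    have hub : ∀ t ∈ {t : ℝ | ∃ f : X → ℝ, LipschitzWith 1 f ∧ t = ∑ᶠ x, f x * m x},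
        t ≤ aeNorm m := by
      rintro t ⟨φ, hφ, rfl⟩
      exact aeNorm_ge_pairing hfin hsum hφ
    have hmemT : aeNorm m ∈ {t : ℝ | ∃ f : X → ℝ, LipschitzWith 1 f ∧ t = ∑ᶠ x, f x * m x} :=
      ⟨f, hfLip, hattain.symm⟩
    refine ⟨le_antisymm ?_ (csSup_le ⟨_, hmemT⟩ hub), f, hfLip, hattain⟩
    exact le_csSup ⟨aeNorm m, hub⟩ hmemT
end
end
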